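/- arXiv:0711.4841 — 3 statements merged into one kernel-verified Lean document; each statement's English description precedes it below -/
import Mathlib

section
/- Let B(x) be the unique formal power series with constant term 1 satisfying B(x) = sum_{k≥0} C_k (x B(x))^k, where C_k = (1/(k+1)) C(2k,k) is the k-th Catalan number. Then the coefficient of x^k in B(x) equals (1/(2k+1)) * C(3k, k). -/
open PowerSeries Finset

noncomputable section NCT

private def u : ℕ → ℕ → ℚ
  | n, 0 => if n = 0 then 1 else 0
  | n, (k+1) => (k+1) * (3*n+k).factorial / (n.factorial * (2*n+k+1).factorial)

private lemma u_succ (n k : ℕ) :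
    u n (k+1) = ((k:ℚ)+1) * (3*n+k).factorial / (n.factorial * (2*n+k+1).factorial) := by
  simp only [u]

private lemma fact_cast_succ (m : ℕ) : ((m+1).factorial : ℚ) = (m+1) * m.factorial := by
  rw [Nat.factorial_succ]; push_cast; ring

private lemma fact_ne (m : ℕ) : (m.factorial : ℚ) ≠ 0 := by
  exact_mod_cast m.factorial_ne_zero

private lemma u_zero_left (k : ℕ) : u 0 k = 1 := by
  cases k with
  | zero => simp [u]
  | succ k =>
    rw [u_succ]
    have h1 : 2*0+k+1 = k+1 := by ring
    have h2 : 3*0+k = k := by ring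
    rw [h1, h2, fact_cast_succ k]
    simp [Nat.factorial_zero]
    field_simp
    exact ⟨by exact_mod_cast Nat.succ_ne_zero k, by exact_mod_cast Nat.factorial_ne_zero k⟩

private lemma u_succ_one (n : ℕ) : u (n+1) 1 = u n 3 := by
  rw [show (1:ℕ) = 0+1 from rfl, u_succ, show (3:ℕ) = 2+1 from rfl, u_succ]
  have h1 : 3*(n+1)+0 = (3*n+2)+1 := by ring
  have h2 : 2*(n+1)+0+1 = 2*n+2+1 := by ring
  rw [h1, h2, fact_cast_succ (3*n+2), fact_cast_succ n]
  rw [div_eq_div_iff (by positivity) (by positivity)]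
  push_cast
  ring

private lemma pascal (n k : ℕ) : u (n+1) (k+1) = u (n+1) k + u n (k+3) := by
  cases k with
  | zero =>
    have : u (n+1) 0 = 0 := by simp [u]
    rw [this, zero_add]
    simpa using u_succ_one n
  | succ k =>
    rw [show k+1+1 = (k+1)+1 from rfl, u_succ, u_succ, show k+1+3 = (k+3)+1 from rfl, u_succ]
    have h1 : 3*(n+1)+(k+1) = (3*n+k+3)+1 := by ring
    have h2 : 2*(n+1)+(k+1)+1 = (2*n+k+3)+1 := by ring
    have h3 : 3*(n+1)+k = (3*n+k+2)+1 := by ring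
    have h4 : 2*(n+1)+k+1 = 2*n+k+3 := by ring
    have h5 : 3*n+(k+3) = (3*n+k+2)+1 := by ring
    have h6 : 2*n+(k+3)+1 = (2*n+k+3)+1 := by ring
    rw [h1, h2, h3, h4, h5, h6, fact_cast_succ (3*n+k+3), fact_cast_succ (2*n+k+3),
      fact_cast_succ (3*n+k+2), fact_cast_succ n]
    field_simp
    push_cast
    ring

private def Fs : PowerSeries ℚ := PowerSeries.mk fun n => u n 1

private lemma coeff_Fs (n : ℕ) : coeff n Fs = u n 1 := coeff_mk n _

private lemma coeff_Fs_pow : ∀ n k : ℕ, coeff n (Fs ^ k) = u n k := by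
  intro n
  induction n using Nat.strong_induction_on with
  | _ n ih =>
    cases n with
    | zero =>
      intro k
      have hc : constantCoeff Fs = 1 := by
        have := coeff_Fs 0
        rw [coeff_zero_eq_constantCoeff] at this
        rw [this, u_zero_left]
      rw [coeff_zero_eq_constantCoeff, map_pow, hc, one_pow, u_zero_left]
    | succ n =>
      intro k
      induction k with
      | zero => simp [u]
      | succ k ihk =>
        rw [pow_succ', coeff_mul, Finset.Nat.sum_antidiagonal_succ]
        have e1 : coeff 0 Fs = 1 := by rw [coeff_Fs, u_zero_left]
        have e2 : ∑ p ∈ antidiagonal n, coeff (p.1+1) Fs * coeff p.2 (Fs^k)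
            = u n (k+3) := by
          have hterm : ∀ p ∈ antidiagonal n,
              coeff (p.1+1) Fs * coeff p.2 (Fs^k)
                = coeff p.1 (Fs^3) * coeff p.2 (Fs^k) := by
            intro p hp
            rw [coeff_Fs, u_succ_one,
              ← ih p.1 (lt_of_le_of_lt (Finset.HasAntidiagonal.antidiagonal.fst_le hp) (Nat.lt_succ_self n)) 3]
          rw [Finset.sum_congr rfl hterm, ← coeff_mul, ← pow_add]
          rw [ih n (Nat.lt_succ_self n) (3+k), Nat.add_comm 3 k]
        rw [e1, one_mul, ihk, e2]
        exact (pascal n k).symm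

private lemma coeff_XF_pow (n k : ℕ) :
    coeff n ((X * Fs) ^ k) = if k ≤ n then u (n-k) k else 0 := by
  rw [mul_pow, mul_comm (X ^ k) (Fs ^ k), coeff_mul_X_pow']
  split_ifs with h
  · exact coeff_Fs_pow (n-k) k
  · rfl

private def D : PowerSeries ℚ :=
  PowerSeries.mk fun n => ∑ k ∈ Finset.range (n+1), (catalan k : ℚ) * coeff n ((X * Fs) ^ k)

private lemma coeff_D_ext (n N : ℕ) (hN : n < N) :
    coeff n D = ∑ k ∈ Finset.range N, (catalan k : ℚ) * coeff n ((X * Fs) ^ k) := by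
  rw [D, coeff_mk]
  apply Finset.sum_subset (Finset.range_subset_range.2 hN)
  intro k hk hk'
  have : ¬ k ≤ n := by simp only [mem_range] at hk' ⊢; omega
  rw [coeff_XF_pow, if_neg this, mul_zero]

private lemma agr_mul {m : ℕ} {P Q R S : PowerSeries ℚ}
    (h1 : ∀ j ≤ m, coeff j P = coeff j Q) (h2 : ∀ j ≤ m, coeff j R = coeff j S) :
    ∀ j ≤ m, coeff j (P * R) = coeff j (Q * S) := by
  intro j hj
  rw [coeff_mul, coeff_mul]
  refine Finset.sum_congr rfl fun p hp => ?_
  rw [h1 p.1 (le_trans (Finset.HasAntidiagonal.antidiagonal.fst_le hp) hj),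
    h2 p.2 (le_trans (Finset.HasAntidiagonal.antidiagonal.snd_le hp) hj)]

private lemma agr_pow {m : ℕ} {P Q : PowerSeries ℚ}
    (h : ∀ j ≤ m, coeff j P = coeff j Q) :
    ∀ k : ℕ, ∀ j ≤ m, coeff j (P ^ k) = coeff j (Q ^ k) := by
  intro k
  induction k with
  | zero => intro j _; rw [pow_zero, pow_zero]
  | succ k ihk =>
    intro j hj
    rw [pow_succ, pow_succ]
    exact agr_mul ihk h j hj

private lemma Dquad (n : ℕ) :
    coeff n D = (if n = 0 then 1 else 0) + coeff n (X * Fs * (D * D)) := by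
  classical
  set N := n + 1 with hN
  set DN : PowerSeries ℚ := ∑ k ∈ Finset.range N, (catalan k : ℚ) • (X * Fs) ^ k with hDN
  have hcoeffDN : ∀ j : ℕ, coeff j DN
      = ∑ k ∈ Finset.range N, (catalan k : ℚ) * coeff j ((X * Fs) ^ k) := by
    intro j
    rw [hDN, map_sum]
    exact Finset.sum_congr rfl fun k _ => by rw [coeff_smul, smul_eq_mul]
  have hagr : ∀ j ≤ n, coeff j D = coeff j DN := by
    intro j hj
    rw [coeff_D_ext j N (by omega), hcoeffDN]
  have hprod : coeff n (X * Fs * (D * D)) = coeff n (X * Fs * (DN * DN)) :=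
    agr_mul (fun j _ => rfl) (agr_mul hagr hagr) n le_rfl
  have hexp : X * Fs * (DN * DN) = ∑ p ∈ Finset.range N ×ˢ Finset.range N,
      ((catalan p.1 : ℚ) * (catalan p.2 : ℚ)) • (X * Fs) ^ (p.1 + p.2 + 1) := by
    rw [hDN, Finset.sum_mul_sum, Finset.mul_sum, Finset.sum_product]
    refine Finset.sum_congr rfl fun i _ => ?_
    rw [Finset.mul_sum]
    refine Finset.sum_congr rfl fun j _ => ?_
    rw [smul_mul_smul_comm, mul_smul_comm]
    congr 1
    ring
  have hco : coeff n (X * Fs * (DN * DN)) = ∑ p ∈ Finset.range N ×ˢ Finset.range N,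
      ((catalan p.1 : ℚ) * (catalan p.2 : ℚ)) * coeff n ((X * Fs) ^ (p.1 + p.2 + 1)) := by
    rw [hexp, map_sum]
    exact Finset.sum_congr rfl fun p _ => by rw [coeff_smul, smul_eq_mul]
  have regroup : ∑ p ∈ Finset.range N ×ˢ Finset.range N,
      ((catalan p.1 : ℚ) * (catalan p.2 : ℚ)) * coeff n ((X * Fs) ^ (p.1 + p.2 + 1))
      = ∑ m ∈ Finset.range n, (catalan (m+1) : ℚ) * coeff n ((X * Fs) ^ (m+1)) := by
    rw [← Finset.sum_subset
      (show (Finset.range n).biUnion (fun m => antidiagonal m) ⊆ Finset.range N ×ˢ Finset.range N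
        from ?_) ?_]
    · rw [Finset.sum_biUnion ?_]
      · refine Finset.sum_congr rfl fun m hm => ?_
        have : ∀ p ∈ antidiagonal m,
            ((catalan p.1 : ℚ) * (catalan p.2 : ℚ)) * coeff n ((X * Fs) ^ (p.1 + p.2 + 1))
            = ((catalan p.1 : ℚ) * (catalan p.2 : ℚ)) * coeff n ((X * Fs) ^ (m + 1)) := by
          intro p hp
          rw [Finset.HasAntidiagonal.mem_antidiagonal.1 hp]
        rw [Finset.sum_congr rfl this, ← Finset.sum_mul, catalan_succ' m]
        push_cast
        ring
      · intro a _ b _ hab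
        simp only [Finset.disjoint_left]
        intro p hpa hpb
        exact hab (by rw [← Finset.HasAntidiagonal.mem_antidiagonal.1 hpa, Finset.HasAntidiagonal.mem_antidiagonal.1 hpb])
    · intro p hp
      simp only [Finset.mem_biUnion, Finset.mem_range, Finset.mem_product] at hp ⊢
      obtain ⟨m, hm, hpm⟩ := hp
      have := Finset.HasAntidiagonal.mem_antidiagonal.1 hpm
      omega
    · intro p _ hp
      simp only [Finset.mem_biUnion, Finset.mem_range] at hp
      have hge : ¬ (p.1 + p.2 + 1 ≤ n) := by
        by_contra hle
        exact hp ⟨p.1 + p.2, by omega, Finset.HasAntidiagonal.mem_antidiagonal.2 rfl⟩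
      rw [coeff_XF_pow, if_neg hge, mul_zero]
  have hD : coeff n D
      = ∑ m ∈ Finset.range n, (catalan (m+1) : ℚ) * coeff n ((X * Fs) ^ (m+1))
        + (if n = 0 then 1 else 0) := by
    rw [coeff_D_ext n N (by omega), hN, Finset.sum_range_succ']
    congr 1
    rw [catalan_zero, pow_zero, coeff_one]
    norm_num
  rw [hD, hprod, hco, regroup]
  ring

private lemma Fquad (n : ℕ) :
    coeff n Fs = (if n = 0 then 1 else 0) + coeff n (X * Fs * (Fs * Fs)) := by
  have h3 : X * Fs * (Fs * Fs) = X * Fs ^ 3 := by ring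
  rw [h3]
  cases n with
  | zero =>
    rw [coeff_Fs, u_zero_left, if_pos rfl]
    have : coeff 0 (X * Fs ^ 3) = 0 := by
      rw [coeff_zero_eq_constantCoeff, map_mul, constantCoeff_X, zero_mul]
    rw [this, add_zero]
  | succ n =>
    rw [coeff_succ_X_mul, coeff_Fs, u_succ_one, if_neg (Nat.succ_ne_zero n), zero_add,
      coeff_Fs_pow]

private lemma DeqF : ∀ n : ℕ, coeff n D = coeff n Fs := by
  intro n
  induction n using Nat.strong_induction_on with
  | _ n ih =>
    rw [Dquad n, Fquad n]
    congr 1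
    cases n with
    | zero =>
      have hz : ∀ P : PowerSeries ℚ, coeff 0 (X * Fs * P) = 0 := by
        intro P
        rw [coeff_zero_eq_constantCoeff, map_mul, map_mul, constantCoeff_X, zero_mul, zero_mul]
      rw [hz, hz]
    | succ n =>
      have hX : ∀ P : PowerSeries ℚ, X * Fs * P = X * (Fs * P) := fun P => by ring
      rw [hX, hX, coeff_succ_X_mul, coeff_succ_X_mul]
      exact agr_mul (fun j _ => rfl)
        (agr_mul (fun j hj => ih j (Nat.lt_succ_of_le hj)) (fun j hj => ih j (Nat.lt_succ_of_le hj)))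
        n le_rfl

private lemma hFs (n : ℕ) :
    coeff n Fs = ∑ k ∈ Finset.range (n+1), (catalan k : ℚ) * coeff n ((X * Fs) ^ k) := by
  rw [← DeqF n, D, coeff_mk]

end NCT

/-- The noncrossing partition transform of the Catalan numbers is the sequence of
ternary (Fuss–Catalan) numbers: if `B` has constant term `1` and satisfies
`B = ∑_{k≥0} C_k (xB)^k` (stated coefficientwise), then the coefficient of `x^k`
in `B` is `(1/(2k+1)) C(3k,k)`. -/
theorem nc_transform_catalan (B : PowerSeries ℚ) (h0 : constantCoeff B = 1)
    (hB : ∀ n : ℕ, coeff n B = ∑ k ∈ Finset.range (n + 1),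
      (catalan k : ℚ) * coeff n ((X * B) ^ k)) :
    ∀ k : ℕ, coeff k B = ((3 * k).choose k : ℚ) / (2 * k + 1) := by
  suffices h : ∀ n : ℕ, coeff n B = coeff n Fs by
    intro k
    rw [h k, coeff_Fs, show (1:ℕ) = 0+1 from rfl, u_succ,
      Nat.cast_choose ℚ (by omega : k ≤ 3*k), show 3*k - k = 2*k from by omega,
      show 3*k+0 = 3*k from rfl, show 2*k+0+1 = 2*k+1 from rfl, fact_cast_succ (2*k)]
    have hk1 := fact_ne k
    have hk2 := fact_ne (2*k)
    have hk3 : ((2*k:ℕ):ℚ) + 1 ≠ 0 := by positivity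
    push_cast
    field_simp
    ring
  intro n
  induction n using Nat.strong_induction_on with
  | _ n ih =>
    rw [hB n, hFs n]
    refine Finset.sum_congr rfl fun k hk => ?_
    rcases Nat.eq_zero_or_pos k with rfl | hkpos
    · simp
    · congr 1
      rw [mul_pow, mul_comm (X ^ k) (B ^ k), coeff_mul_X_pow',
        mul_pow, mul_comm (X ^ k) (Fs ^ k), coeff_mul_X_pow']
      split_ifs with hkn
      · exact agr_pow (fun j hj => ih j (by omega)) k (n-k) le_rfl
      · rfl
end

section
/- If a_k counts configurations (A-structures) on k-element sets (depending only on cardinality, with a_0 = 1), then the number b_n of pairs consisting of a noncrossing set partition of [n] together with an A-structure on each block satisfies, as formal power series, B(x) = sum_{k≥0} a_k (x B(x))^k, where B(x) = sum_{n≥0} b_n x^n. -/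
open scoped Classical

def IsSetPartition (n : ℕ) (P : Finset (Finset (Fin n))) : Prop :=
  (∀ B ∈ P, B ≠ ∅) ∧ ∀ x : Fin n, ∃! B, B ∈ P ∧ x ∈ B

def IsNoncrossing (n : ℕ) (P : Finset (Finset (Fin n))) : Prop :=
  ¬ ∃ a b c d : Fin n, a < b ∧ b < c ∧ c < d ∧
    ∃ B₁ ∈ P, ∃ B₂ ∈ P, B₁ ≠ B₂ ∧ a ∈ B₁ ∧ c ∈ B₁ ∧ b ∈ B₂ ∧ d ∈ B₂

/-- Given a sequence `a` of counts of `A`-structures (depending only on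
cardinality), `ncTransform a n` is the number of pairs consisting of a noncrossing
set partition of `[n]` together with an `A`-structure on each block. -/
noncomputable def ncTransform (a : ℕ → ℕ) (n : ℕ) : ℕ :=
  ∑ P : {P : Finset (Finset (Fin n)) // IsSetPartition n P ∧ IsNoncrossing n P},
    ∏ B ∈ P.1, a B.card

open Finset

section General
variable {α : Type*} {β : Type*} [LinearOrder α] [LinearOrder β]

/-- noncrossing partition of the finset `s` -/
def NCPart (s : Finset α) (P : Finset (Finset α)) : Prop :=
  (∀ B ∈ P, B ≠ ∅) ∧ (∀ B ∈ P, B ⊆ s) ∧ (∀ x ∈ s, ∃! B, B ∈ P ∧ x ∈ B) ∧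
  ¬ ∃ a b c d : α, a < b ∧ b < c ∧ c < d ∧
    ∃ B₁ ∈ P, ∃ B₂ ∈ P, B₁ ≠ B₂ ∧ a ∈ B₁ ∧ c ∈ B₁ ∧ b ∈ B₂ ∧ d ∈ B₂

noncomputable def ncwDom (s : Finset α) : Finset (Finset (Finset α)) :=
  (s.powerset.powerset).filter (fun P => NCPart s P)

lemma mem_ncwDom {s : Finset α} {P : Finset (Finset α)} :
    P ∈ ncwDom s ↔ NCPart s P := by
  constructor
  · exact fun h => (mem_filter.1 h).2
  · intro h
    refine mem_filter.2 ⟨?_, h⟩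
    simp only [mem_powerset]
    intro B hB
    exact mem_powerset.2 (h.2.1 B hB)

/-- weighted count of noncrossing partitions of `s` -/
noncomputable def ncw (a : ℕ → ℕ) (s : Finset α) : ℕ :=
  ∑ P ∈ ncwDom s, ∏ B ∈ P, a B.card

lemma ncw_empty (a : ℕ → ℕ) : ncw a (∅ : Finset α) = 1 := by
  have h : ncwDom (∅ : Finset α) = {∅} := by
    ext P
    simp only [mem_ncwDom, mem_singleton]
    constructor
    · intro h
      ext B
      simp only [Finset.notMem_empty, iff_false]
      intro hB
      exact h.1 B hB (Finset.subset_empty.1 (h.2.1 B hB))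
    · rintro rfl
      refine ⟨by simp, by simp, by simp, ?_⟩
      rintro ⟨a, b, c, d, _, _, _, B₁, hB₁, -⟩
      exact absurd hB₁ (Finset.notMem_empty _)
  rw [ncw, h]
  simp

/-- transport of noncrossing partition along a strictly monotone map -/
lemma NCPart.image {φ : α → β} (hφ : StrictMono φ) {s : Finset α} {P : Finset (Finset α)}
    (hP : NCPart s P) : NCPart (s.image φ) (P.image (fun B => B.image φ)) := by
  obtain ⟨h1, h2, h3, h4⟩ := hP
  refine ⟨?_, ?_, ?_, ?_⟩
  · rintro B hB
    obtain ⟨C, hC, rfl⟩ := mem_image.1 hB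
    simpa using fun h => h1 C hC (by simpa [h] using congrArg id (Finset.image_eq_empty.1 h))
  · rintro B hB
    obtain ⟨C, hC, rfl⟩ := mem_image.1 hB
    exact Finset.image_subset_image (h2 C hC)
  · rintro y hy
    obtain ⟨x, hx, rfl⟩ := mem_image.1 hy
    obtain ⟨B, ⟨hB, hxB⟩, hBu⟩ := h3 x hx
    refine ⟨B.image φ, ⟨mem_image_of_mem _ hB, mem_image_of_mem _ hxB⟩, ?_⟩
    rintro B' ⟨hB', hxB'⟩
    obtain ⟨C, hC, rfl⟩ := mem_image.1 hB'
    obtain ⟨x', hx', hxx'⟩ := mem_image.1 hxB'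
    have : x' = x := hφ.injective hxx'
    subst this
    rw [hBu C ⟨hC, hx'⟩]
  · rintro ⟨p, q, r, t, hpq, hqr, hrt, B₁', hB₁', B₂', hB₂', hne, hp, hr, hq, ht⟩
    obtain ⟨B₁, hB₁, rfl⟩ := mem_image.1 hB₁'
    obtain ⟨B₂, hB₂, rfl⟩ := mem_image.1 hB₂'
    obtain ⟨p₀, hp₀, rfl⟩ := mem_image.1 hp
    obtain ⟨q₀, hq₀, rfl⟩ := mem_image.1 hq
    obtain ⟨r₀, hr₀, rfl⟩ := mem_image.1 hr
    obtain ⟨t₀, ht₀, rfl⟩ := mem_image.1 ht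
    exact h4 ⟨p₀, q₀, r₀, t₀, hφ.lt_iff_lt.1 hpq, hφ.lt_iff_lt.1 hqr, hφ.lt_iff_lt.1 hrt,
      B₁, hB₁, B₂, hB₂, fun h => hne (by rw [h]), hp₀, hr₀, hq₀, ht₀⟩

end General

section General2
variable {α : Type*} {β : Type*} [LinearOrder α] [LinearOrder β]

lemma image_preimage_of_subset {φ : α → β} (hφ : Function.Injective φ) {s : Finset α}
    {B : Finset β} (hB : B ⊆ s.image φ) :
    (B.preimage φ hφ.injOn).image φ = B := by
  ext y
  simp only [mem_image, Finset.mem_preimage]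
  constructor
  · rintro ⟨x, hx, rfl⟩; exact hx
  · intro hy
    obtain ⟨x, _, rfl⟩ := mem_image.1 (hB hy)
    exact ⟨x, hy, rfl⟩

lemma preimage_image_of_inj {φ : α → β} (hφ : Function.Injective φ) (B : Finset α) :
    (B.image φ).preimage φ hφ.injOn = B := by
  ext x
  simp only [Finset.mem_preimage, mem_image]
  exact ⟨fun ⟨y, hy, h⟩ => (hφ h) ▸ hy, fun h => ⟨x, h, rfl⟩⟩

lemma NCPart.preimage {φ : α → β} (hφ : StrictMono φ) {s : Finset α} {P : Finset (Finset β)}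
    (hP : NCPart (s.image φ) P) :
    NCPart s (P.image (fun B => B.preimage φ hφ.injective.injOn)) := by
  obtain ⟨h1, h2, h3, h4⟩ := hP
  refine ⟨?_, ?_, ?_, ?_⟩
  · rintro B hB
    obtain ⟨C, hC, rfl⟩ := mem_image.1 hB
    intro h
    apply h1 C hC
    rw [← image_preimage_of_subset hφ.injective (h2 C hC), h]
    simp
  · rintro B hB
    obtain ⟨C, hC, rfl⟩ := mem_image.1 hB
    intro x hx
    have : φ x ∈ s.image φ := h2 C hC (Finset.mem_preimage.1 hx)
    obtain ⟨x', hx', he⟩ := mem_image.1 this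
    rwa [← hφ.injective he]
  · intro x hx
    obtain ⟨B, ⟨hB, hxB⟩, hBu⟩ := h3 (φ x) (mem_image_of_mem _ hx)
    refine ⟨B.preimage φ hφ.injective.injOn, ⟨mem_image_of_mem _ hB, Finset.mem_preimage.2 hxB⟩, ?_⟩
    rintro B' ⟨hB', hxB'⟩
    obtain ⟨C, hC, rfl⟩ := mem_image.1 hB'
    rw [hBu C ⟨hC, Finset.mem_preimage.1 hxB'⟩]
  · rintro ⟨p, q, r, t, hpq, hqr, hrt, B₁', hB₁', B₂', hB₂', hne, hp, hr, hq, ht⟩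
    obtain ⟨B₁, hB₁, rfl⟩ := mem_image.1 hB₁'
    obtain ⟨B₂, hB₂, rfl⟩ := mem_image.1 hB₂'
    refine h4 ⟨φ p, φ q, φ r, φ t, hφ hpq, hφ hqr, hφ hrt, B₁, hB₁, B₂, hB₂, ?_,
      Finset.mem_preimage.1 hp, Finset.mem_preimage.1 hr,
      Finset.mem_preimage.1 hq, Finset.mem_preimage.1 ht⟩
    intro h; subst h; exact hne rfl

lemma ncw_image (a : ℕ → ℕ) {φ : α → β} (hφ : StrictMono φ) (s : Finset α) :
    ncw a (s.image φ) = ncw a s := by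
  refine Finset.sum_nbij' (fun P => P.image (fun B => B.preimage φ hφ.injective.injOn))
    (fun P => P.image (fun B => B.image φ)) ?_ ?_ ?_ ?_ ?_
  · intro P hP
    exact mem_ncwDom.2 ((mem_ncwDom.1 hP).preimage hφ)
  · intro P hP
    exact mem_ncwDom.2 ((mem_ncwDom.1 hP).image hφ)
  · intro P hP
    have h2 := (mem_ncwDom.1 hP).2.1
    rw [Finset.image_image]
    refine Finset.ext fun B => ?_
    simp only [mem_image, Function.comp]
    constructor
    · rintro ⟨C, hC, rfl⟩
      rwa [image_preimage_of_subset hφ.injective (h2 C hC)]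
    · intro hB
      exact ⟨B, hB, image_preimage_of_subset hφ.injective (h2 B hB)⟩
  · intro P hP
    rw [Finset.image_image]
    refine Finset.ext fun B => ?_
    simp only [mem_image, Function.comp]
    constructor
    · rintro ⟨C, hC, rfl⟩
      rwa [preimage_image_of_inj hφ.injective]
    · intro hB
      exact ⟨B, hB, preimage_image_of_inj hφ.injective B⟩
  · intro P hP
    have h2 := (mem_ncwDom.1 hP).2.1
    refine Finset.prod_bij (fun B _ => B.preimage φ hφ.injective.injOn) ?_ ?_ ?_ ?_
    · intro B hB; exact mem_image_of_mem _ hB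
    · intro B hB C hC h
      rw [← image_preimage_of_subset hφ.injective (h2 B hB), h,
        image_preimage_of_subset hφ.injective (h2 C hC)]
    · intro B hB
      obtain ⟨C, hC, rfl⟩ := mem_image.1 hB
      exact ⟨C, hC, rfl⟩
    · intro B hB
      have hc : (B.preimage φ hφ.injective.injOn).card = B.card := by
        conv_rhs => rw [← image_preimage_of_subset hφ.injective (h2 B hB)]
        exact (Finset.card_image_of_injective _ hφ.injective).symm
      simp only [hc]

end General2

lemma ncTransform_eq_ncw (a : ℕ → ℕ) (n : ℕ) : ncTransform a n = ncw a (Finset.range n) := by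
  have himg : (Finset.univ : Finset (Fin n)).image Fin.val = Finset.range n := by
    ext x
    simp only [mem_image, Finset.mem_univ, true_and, Finset.mem_range]
    exact ⟨fun ⟨i, h⟩ => h ▸ i.isLt, fun h => ⟨⟨x, h⟩, rfl⟩⟩
  rw [← himg, ncw_image a Fin.val_strictMono]
  have key : ∑ P ∈ (Finset.univ : Finset (Finset (Finset (Fin n)))).filter
      (fun P => IsSetPartition n P ∧ IsNoncrossing n P), ∏ B ∈ P, a B.card
      = ncTransform a n :=
    Finset.sum_subtype _ (fun P => by simp) _
  rw [← key]
  apply Finset.sum_congr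
  · ext P
    simp only [mem_filter, Finset.mem_univ, true_and, mem_ncwDom]
    constructor
    · rintro ⟨⟨h1, h2⟩, h3⟩
      exact ⟨h1, fun B _ => Finset.subset_univ B, fun x _ => h2 x, h3⟩
    · rintro ⟨h1, h2, h3, h4⟩
      exact ⟨⟨h1, fun x => h3 x (Finset.mem_univ x)⟩, h4⟩
  · intros; rfl

section CoreDefs

def psum (l : ℕ → ℕ) (i : ℕ) : ℕ := ∑ j ∈ Finset.range i, l j

def gapI (l : ℕ → ℕ) (i : ℕ) : Finset ℕ := Finset.Ico (psum l i + 1) (psum l (i + 1))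

noncomputable def toPart (k : ℕ) (l : ℕ → ℕ) (Q : Fin k → Finset (Finset ℕ)) :
    Finset (Finset ℕ) :=
  insert ((Finset.range k).image (psum l)) (Finset.univ.biUnion Q)

lemma psum_zero (l : ℕ → ℕ) : psum l 0 = 0 := rfl

lemma psum_succ (l : ℕ → ℕ) (i : ℕ) : psum l (i + 1) = psum l i + l i :=
  Finset.sum_range_succ l i

lemma psum_le_psum (l : ℕ → ℕ) {i j : ℕ} (h : i ≤ j) : psum l i ≤ psum l j :=
  Finset.sum_le_sum_of_subset (Finset.range_subset_range.2 h)

lemma psum_lt_psum {l : ℕ → ℕ} {k : ℕ} (hpos : ∀ j < k, 1 ≤ l j) {i j : ℕ}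
    (hij : i < j) (hj : j ≤ k) : psum l i < psum l j := by
  have h1 : psum l i < psum l (i + 1) := by
    rw [psum_succ]
    exact Nat.lt_add_of_pos_right (hpos i (lt_of_lt_of_le hij hj))
  exact lt_of_lt_of_le h1 (psum_le_psum l hij)

lemma lt_of_psum_lt {l : ℕ → ℕ} {i j : ℕ} (h : psum l i < psum l j) : i < j := by
  by_contra hc
  exact absurd (psum_le_psum l (not_lt.1 hc)) (not_le.2 h)

lemma mem_gapI {l : ℕ → ℕ} {i x : ℕ} :
    x ∈ gapI l i ↔ psum l i < x ∧ x < psum l (i + 1) := by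
  simp only [gapI, Finset.mem_Ico, Nat.add_one_le_iff]

lemma gapI_eq_of_mem {l : ℕ → ℕ} {k i j x : ℕ} (hpos : ∀ j < k, 1 ≤ l j)
    (hi : i < k) (hj : j < k) (hxi : x ∈ gapI l i) (hxj : x ∈ gapI l j) : i = j := by
  rw [mem_gapI] at hxi hxj
  by_contra hc
  rcases Nat.lt_or_ge i j with h | h
  · have : psum l (i + 1) ≤ psum l j := psum_le_psum l h
    omega
  · have hji : j < i := lt_of_le_of_ne h (Ne.symm hc)
    have : psum l (j + 1) ≤ psum l i := psum_le_psum l hji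
    omega

lemma psum_not_mem_gapI {l : ℕ → ℕ} {i j : ℕ} : psum l j ∉ gapI l i := by
  rw [mem_gapI]
  rintro ⟨h1, h2⟩
  have hij : i < j := lt_of_psum_lt h1
  have : j < i + 1 := lt_of_psum_lt h2
  omega

/-- every x < n not of the form psum lies in some gap -/
lemma exists_gapI {l : ℕ → ℕ} {k n x : ℕ} (hsum : psum l k = n) (hk : 0 < k)
    (hx : x < n) (hxB : ∀ i < k, psum l i ≠ x) : ∃ i < k, x ∈ gapI l i := by
  classical
  set i := Nat.findGreatest (fun j => psum l j ≤ x) (k - 1) with hi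
  have h0 : psum l 0 ≤ x := by rw [psum_zero]; exact Nat.zero_le x
  have hspec : psum l i ≤ x :=
    Nat.findGreatest_spec (P := fun j => psum l j ≤ x) (m := 0) (Nat.zero_le _) h0
  have hik : i < k := lt_of_le_of_lt (Nat.findGreatest_le _) (by omega)
  refine ⟨i, hik, mem_gapI.2 ⟨lt_of_le_of_ne hspec (hxB i hik), ?_⟩⟩
  rcases Nat.lt_or_ge (i + 1) k with h | h
  · have hgt : ¬ psum l (i + 1) ≤ x := by
      have := Nat.findGreatest_is_greatest (P := fun j => psum l j ≤ x) (n := k - 1)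
        (k := i + 1) (by rw [← hi]; exact Nat.lt_succ_self i) (by omega)
      exact this
    omega
  · have : i + 1 = k := by omega
    rw [this, hsum]
    exact hx

end CoreDefs

section Backward
variable {n k : ℕ} {l : ℕ → ℕ} {Q : Fin k → Finset (Finset ℕ)}

lemma gapI_subset_range (hsum : psum l k = n) {i : Fin k} : gapI l (i : ℕ) ⊆ Finset.range n := by
  intro x hx
  rw [mem_gapI] at hx
  rw [Finset.mem_range]
  calc x < psum l ((i : ℕ) + 1) := hx.2
    _ ≤ psum l k := psum_le_psum l i.isLt
    _ = n := hsum

lemma zero_mem_B0 (hk : 0 < k) : 0 ∈ (Finset.range k).image (psum l) := by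
  refine mem_image.2 ⟨0, Finset.mem_range.2 hk, psum_zero l⟩

lemma toPart_valid (hn : 0 < n) (hsum : psum l k = n) (hpos : ∀ j < k, 1 ≤ l j)
    (hQ : ∀ i : Fin k, NCPart (gapI l (i : ℕ)) (Q i)) :
    NCPart (Finset.range n) (toPart k l Q) := by
  have hk : 0 < k := by
    by_contra hc
    have : k = 0 := by omega
    rw [this] at hsum
    rw [psum_zero] at hsum
    omega
  set B0 : Finset ℕ := (Finset.range k).image (psum l) with hB0
  -- membership characterization for blocks of toPart
  have hmem : ∀ B, B ∈ toPart k l Q ↔ B = B0 ∨ ∃ i, B ∈ Q i := by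
    intro B
    simp only [toPart, Finset.mem_insert, Finset.mem_biUnion, Finset.mem_univ, true_and, hB0]
  have hQsub : ∀ (i : Fin k), ∀ B ∈ Q i, B ⊆ gapI l (i : ℕ) := fun i => (hQ i).2.1
  have hB0mem : ∀ {x : ℕ}, x ∈ B0 ↔ ∃ j < k, psum l j = x := by
    intro x
    simp only [hB0, mem_image, Finset.mem_range]
  have hnotgap : ∀ {x : ℕ} (i : Fin k), x ∈ gapI l (i : ℕ) → x ∉ B0 := by
    intro x i hx hxB
    obtain ⟨j, _, rfl⟩ := hB0mem.1 hxB
    exact psum_not_mem_gapI hx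
  refine ⟨?_, ?_, ?_, ?_⟩
  · intro B hB
    rcases (hmem B).1 hB with rfl | ⟨i, hi⟩
    · exact Finset.ne_empty_of_mem (zero_mem_B0 hk)
    · exact (hQ i).1 B hi
  · intro B hB
    rcases (hmem B).1 hB with rfl | ⟨i, hi⟩
    · intro x hx
      obtain ⟨j, hj, rfl⟩ := hB0mem.1 hx
      exact Finset.mem_range.2 (lt_of_lt_of_le (psum_lt_psum hpos hj le_rfl) (le_of_eq hsum))
    · exact (hQsub i B hi).trans (gapI_subset_range hsum)
  · intro x hx
    by_cases hxB : x ∈ B0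
    · refine ⟨B0, ⟨(hmem B0).2 (Or.inl rfl), hxB⟩, ?_⟩
      rintro B ⟨hB, hxB'⟩
      rcases (hmem B).1 hB with rfl | ⟨i, hi⟩
      · rfl
      · exact absurd hxB (hnotgap i (hQsub i B hi hxB'))
    · have hex : ∃ i < k, x ∈ gapI l i := by
        refine exists_gapI hsum hk (Finset.mem_range.1 hx) ?_
        intro i hi he
        exact hxB (hB0mem.2 ⟨i, hi, he⟩)
      obtain ⟨i, hik, hgi⟩ := hex
      obtain ⟨B, ⟨hBQ, hxB'⟩, hBu⟩ := (hQ ⟨i, hik⟩).2.2.1 x hgi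
      refine ⟨B, ⟨(hmem B).2 (Or.inr ⟨⟨i, hik⟩, hBQ⟩), hxB'⟩, ?_⟩
      rintro C ⟨hC, hxC⟩
      rcases (hmem C).1 hC with rfl | ⟨j, hj⟩
      · exact absurd hxC fun hc => hxB hc
      · have hgj : x ∈ gapI l (j : ℕ) := hQsub j C hj hxC
        have : (j : ℕ) = i := gapI_eq_of_mem hpos j.isLt hik hgj hgi
        have hji : j = (⟨i, hik⟩ : Fin k) := Fin.ext this
        subst hji
        exact hBu C ⟨hj, hxC⟩
  · rintro ⟨p, q, r, t, hpq, hqr, hrt, B₁, hB₁, B₂, hB₂, hne, hp, hr, hq, ht⟩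
    rcases (hmem B₁).1 hB₁ with rfl | ⟨i, hi⟩
    · rcases (hmem B₂).1 hB₂ with rfl | ⟨j, hj⟩
      · exact hne rfl
      · -- p, r ∈ B0 ; q, t ∈ gapI j
        have hgq := mem_gapI.1 (hQsub j B₂ hj hq)
        have hgt' := mem_gapI.1 (hQsub j B₂ hj ht)
        obtain ⟨r', hr'k, hre⟩ := hB0mem.1 hr
        have h1 : (j : ℕ) < r' :=
          lt_of_psum_lt (show psum l (j : ℕ) < psum l r' by omega)
        have h2 : r' < (j : ℕ) + 1 :=
          lt_of_psum_lt (show psum l r' < psum l ((j : ℕ) + 1) by omega)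
        omega
    · rcases (hmem B₂).1 hB₂ with rfl | ⟨j, hj⟩
      · -- p, r ∈ gapI i ; q ∈ B0
        have hgp := mem_gapI.1 (hQsub i B₁ hi hp)
        have hgr := mem_gapI.1 (hQsub i B₁ hi hr)
        obtain ⟨q', hq'k, hqe⟩ := hB0mem.1 hq
        have h1 : (i : ℕ) < q' :=
          lt_of_psum_lt (show psum l (i : ℕ) < psum l q' by omega)
        have h2 : q' < (i : ℕ) + 1 :=
          lt_of_psum_lt (show psum l q' < psum l ((i : ℕ) + 1) by omega)
        omega
      · by_cases hij : i = j
        · subst hij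
          exact (hQ i).2.2.2 ⟨p, q, r, t, hpq, hqr, hrt, B₁, hi, B₂, hj, hne, hp, hr, hq, ht⟩
        · have hgp := mem_gapI.1 (hQsub i B₁ hi hp)
          have hgr := mem_gapI.1 (hQsub i B₁ hi hr)
          have hgq := mem_gapI.1 (hQsub j B₂ hj hq)
          rcases Nat.lt_or_ge (i : ℕ) (j : ℕ) with h | h
          · have : psum l ((i : ℕ) + 1) ≤ psum l (j : ℕ) := psum_le_psum l h
            omega
          · have hji : (j : ℕ) < (i : ℕ) := by
              rcases Nat.lt_or_ge (j : ℕ) (i : ℕ) with h' | h'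
              · exact h'
              · exact absurd (Fin.ext (le_antisymm h' h)) hij
            have : psum l ((j : ℕ) + 1) ≤ psum l (i : ℕ) := psum_le_psum l hji
            omega

end Backward

section Weight
variable {n k : ℕ} {l : ℕ → ℕ} {Q : Fin k → Finset (Finset ℕ)}

lemma B0_card (hpos : ∀ j < k, 1 ≤ l j) : ((Finset.range k).image (psum l)).card = k := by
  rw [Finset.card_image_of_injOn, Finset.card_range]
  intro i hi j hj hij
  simp only [Finset.coe_range, Set.mem_Iio] at hi hj
  by_contra hc
  rcases Nat.lt_or_ge i j with h | h
  · exact absurd hij (Nat.ne_of_lt (psum_lt_psum hpos h (le_of_lt hj)))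
  · have h' : j < i := by omega
    exact absurd hij.symm (Nat.ne_of_lt (psum_lt_psum hpos h' (le_of_lt hi)))

lemma toPart_weight (a : ℕ → ℕ) (hk : 0 < k) (hpos : ∀ j < k, 1 ≤ l j)
    (hQ : ∀ i : Fin k, NCPart (gapI l (i : ℕ)) (Q i)) :
    ∏ B ∈ toPart k l Q, a B.card = a k * ∏ i : Fin k, ∏ B ∈ Q i, a B.card := by
  have hdisj : ∀ (i j : Fin k), i ≠ j → Disjoint (Q i) (Q j) := by
    intro i j hij
    rw [Finset.disjoint_left]
    intro B hBi hBj
    obtain ⟨x, hx⟩ := Finset.nonempty_iff_ne_empty.2 ((hQ i).1 B hBi)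
    have hgi : x ∈ gapI l (i : ℕ) := (hQ i).2.1 B hBi hx
    have hgj : x ∈ gapI l (j : ℕ) := (hQ j).2.1 B hBj hx
    exact hij (Fin.ext (gapI_eq_of_mem hpos i.isLt j.isLt hgi hgj))
  have hB0not : ((Finset.range k).image (psum l)) ∉ Finset.univ.biUnion Q := by
    intro h
    obtain ⟨i, _, hi⟩ := Finset.mem_biUnion.1 h
    have h0 : (0 : ℕ) ∈ gapI l (i : ℕ) := (hQ i).2.1 _ hi (zero_mem_B0 hk)
    rw [mem_gapI] at h0
    omega
  rw [toPart, Finset.prod_insert hB0not, B0_card hpos,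
    Finset.prod_biUnion (fun i _ => fun j _ hij => hdisj i j hij)]

end Weight

section Forward

lemma NC_mono {P P' : Finset (Finset ℕ)} (hsub : P' ⊆ P)
    (h : ¬ ∃ a b c d : ℕ, a < b ∧ b < c ∧ c < d ∧
      ∃ B₁ ∈ P, ∃ B₂ ∈ P, B₁ ≠ B₂ ∧ a ∈ B₁ ∧ c ∈ B₁ ∧ b ∈ B₂ ∧ d ∈ B₂) :
    ¬ ∃ a b c d : ℕ, a < b ∧ b < c ∧ c < d ∧
      ∃ B₁ ∈ P', ∃ B₂ ∈ P', B₁ ≠ B₂ ∧ a ∈ B₁ ∧ c ∈ B₁ ∧ b ∈ B₂ ∧ d ∈ B₂ := by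
  rintro ⟨p, q, r, t, h1, h2, h3, B₁, hB₁, B₂, hB₂, h4⟩
  exact h ⟨p, q, r, t, h1, h2, h3, B₁, hsub hB₁, B₂, hsub hB₂, h4⟩

lemma block_unique {s : Finset ℕ} {P : Finset (Finset ℕ)} (hP : NCPart s P)
    {B C : Finset ℕ} {x : ℕ} (hB : B ∈ P) (hC : C ∈ P) (hxB : x ∈ B) (hxC : x ∈ C) :
    B = C := by
  have hxs : x ∈ s := hP.2.1 B hB hxB
  obtain ⟨D, _, hDu⟩ := hP.2.2.1 x hxs
  rw [hDu B ⟨hB, hxB⟩, hDu C ⟨hC, hxC⟩]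

noncomputable def block0 (P : Finset (Finset ℕ)) : Finset ℕ :=
  if h : ∃ B, B ∈ P ∧ 0 ∈ B then h.choose else ∅

noncomputable def bE (n : ℕ) (P : Finset (Finset ℕ)) (i : ℕ) : ℕ :=
  if h : i < (block0 P).card then ((block0 P).orderEmbOfFin rfl) ⟨i, h⟩ else n

variable {n : ℕ} {P : Finset (Finset ℕ)}

lemma exists_block0 (hn : 0 < n) (hP : NCPart (Finset.range n) P) :
    ∃ B, B ∈ P ∧ 0 ∈ B := by
  obtain ⟨B, hB, -⟩ := hP.2.2.1 0 (Finset.mem_range.2 hn)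
  exact ⟨B, hB⟩

lemma block0_spec (hn : 0 < n) (hP : NCPart (Finset.range n) P) :
    block0 P ∈ P ∧ 0 ∈ block0 P := by
  rw [block0, dif_pos (exists_block0 hn hP)]
  exact (exists_block0 hn hP).choose_spec

lemma block0_eq (hn : 0 < n) (hP : NCPart (Finset.range n) P) {B : Finset ℕ}
    (hB : B ∈ P) (h0 : 0 ∈ B) : block0 P = B :=
  block_unique hP (block0_spec hn hP).1 hB (block0_spec hn hP).2 h0

lemma block0_card_pos (hn : 0 < n) (hP : NCPart (Finset.range n) P) :
    0 < (block0 P).card :=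
  Finset.card_pos.2 ⟨0, (block0_spec hn hP).2⟩

lemma bE_mem {i : ℕ} (hi : i < (block0 P).card) : bE n P i ∈ block0 P := by
  rw [bE, dif_pos hi]
  exact Finset.orderEmbOfFin_mem _ _ _

lemma bE_eq_n {i : ℕ} (hi : (block0 P).card ≤ i) : bE n P i = n := by
  rw [bE, dif_neg (not_lt.2 hi)]

lemma mem_block0_iff (hn : 0 < n) (hP : NCPart (Finset.range n) P) {x : ℕ} :
    x ∈ block0 P ↔ ∃ i < (block0 P).card, bE n P i = x := by
  constructor
  · intro hx
    have := Finset.range_orderEmbOfFin (block0 P) (rfl : (block0 P).card = (block0 P).card)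
    have hx' : x ∈ Set.range ((block0 P).orderEmbOfFin rfl) := by rw [this]; exact hx
    obtain ⟨⟨i, hi⟩, he⟩ := hx'
    exact ⟨i, hi, by rw [bE, dif_pos hi]; exact he⟩
  · rintro ⟨i, hi, rfl⟩
    exact bE_mem hi

lemma bE_lt_n (hn : 0 < n) (hP : NCPart (Finset.range n) P) {i : ℕ}
    (hi : i < (block0 P).card) : bE n P i < n :=
  Finset.mem_range.1 (hP.2.1 _ (block0_spec hn hP).1 (bE_mem hi))

lemma bE_strict (hn : 0 < n) (hP : NCPart (Finset.range n) P) {i j : ℕ}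
    (hij : i < j) (hj : j ≤ (block0 P).card) : bE n P i < bE n P j := by
  rcases eq_or_lt_of_le hj with rfl | hjlt
  · rw [bE_eq_n le_rfl]
    exact bE_lt_n hn hP (lt_of_lt_of_le hij le_rfl)
  · rw [bE, bE, dif_pos (lt_trans hij hjlt), dif_pos hjlt]
    exact ((block0 P).orderEmbOfFin rfl).strictMono (show (⟨i, _⟩ : Fin _) < ⟨j, hjlt⟩ from hij)

lemma bE_mono (hn : 0 < n) (hP : NCPart (Finset.range n) P) {i j : ℕ}
    (hij : i ≤ j) (hj : j ≤ (block0 P).card) : bE n P i ≤ bE n P j := by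
  rcases eq_or_lt_of_le hij with rfl | h
  · exact le_rfl
  · exact le_of_lt (bE_strict hn hP h hj)

lemma bE_zero (hn : 0 < n) (hP : NCPart (Finset.range n) P) : bE n P 0 = 0 := by
  obtain ⟨i, hi, he⟩ := (mem_block0_iff hn hP).1 (block0_spec hn hP).2
  have h1 : bE n P 0 ≤ bE n P i := bE_mono hn hP (Nat.zero_le i) (le_of_lt hi)
  omega

lemma lt_of_bE_lt (hn : 0 < n) (hP : NCPart (Finset.range n) P) {i j : ℕ}
    (hi : i ≤ (block0 P).card) (h : bE n P i < bE n P j) : j ≠ 0 → i < j := by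
  intro _
  by_contra hc
  exact absurd (bE_mono hn hP (not_lt.1 hc) hi) (not_le.2 h)

/-- for x not in `block0 P`, find the gap it belongs to -/
lemma exists_bE_gap (hn : 0 < n) (hP : NCPart (Finset.range n) P) {x : ℕ}
    (hx : x < n) (hxB : x ∉ block0 P) :
    ∃ i < (block0 P).card, bE n P i < x ∧ x < bE n P (i + 1) := by
  classical
  set K := (block0 P).card with hK
  have hKpos : 0 < K := block0_card_pos hn hP
  set i := Nat.findGreatest (fun j => bE n P j ≤ x) (K - 1) with hi
  have h0 : bE n P 0 ≤ x := by rw [bE_zero hn hP]; exact Nat.zero_le x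
  have hspec : bE n P i ≤ x :=
    Nat.findGreatest_spec (P := fun j => bE n P j ≤ x) (m := 0) (Nat.zero_le _) h0
  have hik : i < K := lt_of_le_of_lt (Nat.findGreatest_le _) (by omega)
  have hne : bE n P i ≠ x := fun he => hxB (he ▸ bE_mem (hK ▸ hik))
  refine ⟨i, hik, lt_of_le_of_ne hspec hne, ?_⟩
  rcases Nat.lt_or_ge (i + 1) K with h | h
  · have hgt : ¬ bE n P (i + 1) ≤ x := by
      have := Nat.findGreatest_is_greatest (P := fun j => bE n P j ≤ x) (n := K - 1)
        (k := i + 1) (by rw [← hi]; exact Nat.lt_succ_self i) (by omega)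
      exact this
    omega
  · have hik1 : i + 1 = K := by omega
    rw [hik1, bE_eq_n (hK ▸ le_rfl)]
    exact hx

lemma bE_gap_unique (hn : 0 < n) (hP : NCPart (Finset.range n) P) {x i j : ℕ}
    (hi : i < (block0 P).card) (hj : j < (block0 P).card)
    (hxi : bE n P i < x ∧ x < bE n P (i + 1)) (hxj : bE n P j < x ∧ x < bE n P (j + 1)) :
    i = j := by
  by_contra hc
  rcases Nat.lt_or_ge i j with h | h
  · have : bE n P (i + 1) ≤ bE n P j := bE_mono hn hP h (le_of_lt hj)
    omega
  · have hji : j < i := by omega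
    have : bE n P (j + 1) ≤ bE n P i := bE_mono hn hP hji (le_of_lt hi)
    omega

end Forward

section Forward2
variable {n : ℕ} {P : Finset (Finset ℕ)}

/-- key structural lemma: every non-initial block lies inside a single gap -/
lemma block_subset_gap (hn : 0 < n) (hP : NCPart (Finset.range n) P) {B : Finset ℕ}
    (hB : B ∈ P) (hne : B ≠ block0 P) :
    ∃ i < (block0 P).card, ∀ x ∈ B, bE n P i < x ∧ x < bE n P (i + 1) := by
  have hnotin : ∀ x ∈ B, x ∉ block0 P := by
    intro x hx hx0
    exact hne (block_unique hP hB (block0_spec hn hP).1 hx hx0)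
  have hlt : ∀ x ∈ B, x < n := fun x hx => Finset.mem_range.1 (hP.2.1 B hB hx)
  obtain ⟨x₀, hx₀⟩ := Finset.nonempty_iff_ne_empty.2 (hP.1 B hB)
  obtain ⟨i, hik, hgi⟩ := exists_bE_gap hn hP (hlt x₀ hx₀) (hnotin x₀ hx₀)
  refine ⟨i, hik, ?_⟩
  intro x hx
  obtain ⟨j, hjk, hgj⟩ := exists_bE_gap hn hP (hlt x hx) (hnotin x hx)
  -- show j = i, otherwise crossing
  have key : ∀ (p q : ℕ), p ∈ B → q ∈ B → ∀ (ip iq : ℕ), ip < (block0 P).card →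
      iq < (block0 P).card → bE n P ip < p ∧ p < bE n P (ip + 1) →
      bE n P iq < q ∧ q < bE n P (iq + 1) → ip < iq → False := by
    intro p q hp hq ip iq hipk hiqk hgp hgq hlt'
    have hipk1 : ip + 1 ≤ iq := hlt'
    have h1 : bE n P (ip + 1) ≤ bE n P iq := bE_mono hn hP hipk1 (le_of_lt hiqk)
    -- crossing: bE ip < p < bE (ip+1) < ... < q with bE ip, bE (ip+1) ∈ block0, p, q ∈ B
    refine hP.2.2.2 ⟨bE n P ip, p, bE n P (ip + 1), q, hgp.1, hgp.2, by omega,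
      block0 P, (block0_spec hn hP).1, B, hB, fun h => hne h.symm,
      bE_mem hipk, bE_mem (by omega), hp, hq⟩
  rcases Nat.lt_trichotomy j i with h | h | h
  · exact absurd (key x x₀ hx hx₀ j i hjk hik hgj hgi h) (fun h => h)
  · rwa [← h]
  · exact absurd (key x₀ x hx₀ hx i j hik hjk hgi hgj h) (fun h => h)

noncomputable def diffL (n : ℕ) (P : Finset (Finset ℕ)) : ℕ →₀ ℕ :=
  Finsupp.onFinset (Finset.range (block0 P).card)
    (fun i => if i < (block0 P).card then bE n P (i + 1) - bE n P i else 0)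
    (fun i h => by
      rw [Finset.mem_range]
      by_contra hc
      exact h (if_neg (fun hlt => hc hlt)))

noncomputable def fwdQ (n : ℕ) (P : Finset (Finset ℕ)) :
    Fin (block0 P).card → Finset (Finset ℕ) :=
  fun i => P.filter (fun B => B ⊆ Finset.Ico (bE n P (i : ℕ) + 1) (bE n P ((i : ℕ) + 1)))

lemma diffL_support : (diffL n P).support ⊆ Finset.range (block0 P).card := by
  rw [diffL]
  exact Finsupp.support_onFinset_subset

lemma diffL_apply_lt {i : ℕ} (hi : i < (block0 P).card) :
    diffL n P i = bE n P (i + 1) - bE n P i := by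
  simp only [diffL, Finsupp.onFinset_apply, if_pos hi]

lemma diffL_apply_ge {i : ℕ} (hi : (block0 P).card ≤ i) : diffL n P i = 0 := by
  simp only [diffL, Finsupp.onFinset_apply, if_neg (not_lt.2 hi)]

lemma psum_diffL (hn : 0 < n) (hP : NCPart (Finset.range n) P) {i : ℕ}
    (hi : i ≤ (block0 P).card) : psum (diffL n P) i = bE n P i := by
  induction i with
  | zero => rw [psum_zero, bE_zero hn hP]
  | succ m ih =>
    have hm : m < (block0 P).card := hi
    rw [psum_succ, ih (le_of_lt hm), diffL_apply_lt hm]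
    have := bE_strict hn hP (show m < m + 1 by omega) hi
    omega

lemma psum_diffL_card (hn : 0 < n) (hP : NCPart (Finset.range n) P) :
    psum (diffL n P) (block0 P).card = n := by
  rw [psum_diffL hn hP le_rfl, bE_eq_n le_rfl]

lemma diffL_pos (hn : 0 < n) (hP : NCPart (Finset.range n) P) {i : ℕ}
    (hi : i < (block0 P).card) : 1 ≤ diffL n P i := by
  rw [diffL_apply_lt hi]
  have := bE_strict hn hP (show i < i + 1 by omega) hi
  omega

lemma gapI_diffL (hn : 0 < n) (hP : NCPart (Finset.range n) P) {i : ℕ}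
    (hi : i < (block0 P).card) :
    gapI (diffL n P) i = Finset.Ico (bE n P i + 1) (bE n P (i + 1)) := by
  rw [gapI, psum_diffL hn hP (le_of_lt hi), psum_diffL hn hP hi]

lemma fwdQ_valid (hn : 0 < n) (hP : NCPart (Finset.range n) P) (i : Fin (block0 P).card) :
    NCPart (gapI (diffL n P) (i : ℕ)) (fwdQ n P i) := by
  rw [gapI_diffL hn hP i.isLt]
  have hIco : ∀ {x : ℕ}, x ∈ Finset.Ico (bE n P (i : ℕ) + 1) (bE n P ((i : ℕ) + 1)) ↔
      bE n P (i : ℕ) < x ∧ x < bE n P ((i : ℕ) + 1) := by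
    intro x
    rw [Finset.mem_Ico]
    omega
  refine ⟨?_, ?_, ?_, ?_⟩
  · intro B hB
    exact hP.1 B (Finset.mem_filter.1 hB).1
  · intro B hB
    exact (Finset.mem_filter.1 hB).2
  · intro x hx
    have hxg := hIco.1 hx
    have hxn : x < n := by
      have h2 : bE n P ((i : ℕ) + 1) ≤ n := by
        rcases Nat.lt_or_ge ((i : ℕ) + 1) (block0 P).card with h | h
        · exact le_of_lt (bE_lt_n hn hP h)
        · rw [bE_eq_n h]
      omega
    have hxnot : x ∉ block0 P := by
      intro hc
      obtain ⟨j, hj, he⟩ := (mem_block0_iff hn hP).1 hc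
      subst he
      have h1 : (i : ℕ) < j := by
        refine lt_of_bE_lt hn hP (le_of_lt i.isLt) hxg.1 ?_
        intro h0
        rw [h0, bE_zero hn hP] at hxg
        omega
      have h2 : j < (i : ℕ) + 1 := lt_of_bE_lt hn hP (by omega) hxg.2 (by omega)
      omega
    obtain ⟨B, ⟨hB, hxB⟩, hBu⟩ := hP.2.2.1 x (Finset.mem_range.2 hxn)
    have hBne : B ≠ block0 P := by
      intro h
      exact hxnot (h ▸ hxB)
    obtain ⟨j, hjk, hsub⟩ := block_subset_gap hn hP hB hBne
    have hji : j = (i : ℕ) := bE_gap_unique hn hP hjk i.isLt (hsub x hxB) hxg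
    subst hji
    refine ⟨B, ⟨Finset.mem_filter.2 ⟨hB, fun y hy => hIco.2 (hsub y hy)⟩, hxB⟩, ?_⟩
    rintro C ⟨hC, hxC⟩
    exact hBu C ⟨(Finset.mem_filter.1 hC).1, hxC⟩
  · exact NC_mono (Finset.filter_subset _ _) hP.2.2.2

lemma toPart_fwd (hn : 0 < n) (hP : NCPart (Finset.range n) P) :
    toPart (block0 P).card (diffL n P) (fwdQ n P) = P := by
  have hB0 : (Finset.range (block0 P).card).image (psum (diffL n P)) = block0 P := by
    ext x
    rw [mem_block0_iff hn hP]
    simp only [mem_image, Finset.mem_range]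
    constructor
    · rintro ⟨i, hi, rfl⟩
      exact ⟨i, hi, (psum_diffL hn hP (le_of_lt hi)).symm⟩
    · rintro ⟨i, hi, rfl⟩
      exact ⟨i, hi, psum_diffL hn hP (le_of_lt hi)⟩
  ext B
  simp only [toPart, Finset.mem_insert, Finset.mem_biUnion, Finset.mem_univ, true_and, hB0]
  constructor
  · rintro (rfl | ⟨i, hi⟩)
    · exact (block0_spec hn hP).1
    · exact (Finset.mem_filter.1 hi).1
  · intro hB
    by_cases hne : B = block0 P
    · exact Or.inl hne
    · obtain ⟨i, hik, hsub⟩ := block_subset_gap hn hP hB hne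
      refine Or.inr ⟨⟨i, hik⟩, Finset.mem_filter.2 ⟨hB, ?_⟩⟩
      intro y hy
      rw [Finset.mem_Ico]
      simp only [Fin.val_mk]
      have := hsub y hy
      omega

end Forward2

section RightInv

lemma orderEmbOfFin_image_eq {g : ℕ → ℕ} {k : ℕ} (hg : ∀ i j, i < j → j < k → g i < g j)
    (hcard : ((Finset.range k).image g).card = k) :
    ∀ (i : ℕ) (hi : i < ((Finset.range k).image g).card),
      ((Finset.range k).image g).orderEmbOfFin rfl ⟨i, hi⟩ = g i := by
  set s := (Finset.range k).image g with hs
  have key : (fun j : Fin s.card => g (j : ℕ)) = ⇑(s.orderEmbOfFin rfl) := by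
    apply Finset.orderEmbOfFin_unique
    · intro j
      exact mem_image.2 ⟨(j : ℕ), Finset.mem_range.2 (hcard ▸ j.isLt), rfl⟩
    · intro p q h
      exact hg p q h (hcard ▸ q.isLt)
  intro i hi
  rw [← congrFun key ⟨i, hi⟩]

variable {n k : ℕ} {l : ℕ → ℕ} {Q : Fin k → Finset (Finset ℕ)}

lemma k_pos (hn : 0 < n) (hsum : psum l k = n) : 0 < k := by
  by_contra hc
  have : k = 0 := by omega
  rw [this, psum_zero] at hsum
  omega

lemma block0_toPart (hn : 0 < n) (hsum : psum l k = n) (hpos : ∀ j < k, 1 ≤ l j)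
    (hQ : ∀ i : Fin k, NCPart (gapI l (i : ℕ)) (Q i)) :
    block0 (toPart k l Q) = (Finset.range k).image (psum l) :=
  block0_eq hn (toPart_valid hn hsum hpos hQ) (Finset.mem_insert_self _ _)
    (zero_mem_B0 (k_pos hn hsum))

lemma block0_toPart_card (hn : 0 < n) (hsum : psum l k = n) (hpos : ∀ j < k, 1 ≤ l j)
    (hQ : ∀ i : Fin k, NCPart (gapI l (i : ℕ)) (Q i)) :
    (block0 (toPart k l Q)).card = k := by
  rw [block0_toPart hn hsum hpos hQ]
  exact B0_card hpos

lemma bE_toPart (hn : 0 < n) (hsum : psum l k = n) (hpos : ∀ j < k, 1 ≤ l j)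
    (hQ : ∀ i : Fin k, NCPart (gapI l (i : ℕ)) (Q i)) {i : ℕ} (hi : i ≤ k) :
    bE n (toPart k l Q) i = psum l i := by
  have hb := block0_toPart hn hsum hpos hQ
  have hcard := block0_toPart_card hn hsum hpos hQ
  rcases eq_or_lt_of_le hi with rfl | hik
  · rw [bE_eq_n (le_of_eq hcard), hsum]
  · rw [bE]
    simp only [hb]
    have hi' : i < ((Finset.range k).image (psum l)).card := by
      rw [B0_card hpos]; exact hik
    rw [dif_pos hi']
    have hg : ∀ p q : ℕ, p < q → q < k → psum l p < psum l q :=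
      fun p q hpq hq => psum_lt_psum hpos hpq (le_of_lt hq)
    exact orderEmbOfFin_image_eq hg (B0_card hpos) i hi'

end RightInv

section RightInv2
variable {n k : ℕ} {lF : ℕ →₀ ℕ} {Q : Fin k → Finset (Finset ℕ)}

lemma diffL_toPart (hn : 0 < n) (hsum : psum lF k = n) (hpos : ∀ j < k, 1 ≤ lF j)
    (hsupp : lF.support ⊆ Finset.range k)
    (hQ : ∀ i : Fin k, NCPart (gapI lF (i : ℕ)) (Q i)) :
    diffL n (toPart k lF Q) = lF := by
  have hcard := block0_toPart_card hn hsum hpos hQ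
  ext i
  rcases Nat.lt_or_ge i k with hik | hik
  · rw [diffL_apply_lt (by omega : i < (block0 (toPart k lF Q)).card),
      bE_toPart hn hsum hpos hQ (le_of_lt hik), bE_toPart hn hsum hpos hQ hik,
      psum_succ]
    omega
  · rw [diffL_apply_ge (by omega : (block0 (toPart k lF Q)).card ≤ i)]
    by_contra hc
    have : i ∈ lF.support := Finsupp.mem_support_iff.2 (fun h => hc h.symm)
    have := Finset.mem_range.1 (hsupp this)
    omega

lemma fwdQ_toPart (hn : 0 < n) (hsum : psum lF k = n) (hpos : ∀ j < k, 1 ≤ lF j)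
    (hQ : ∀ i : Fin k, NCPart (gapI lF (i : ℕ)) (Q i)) {i : ℕ}
    (h' : i < (block0 (toPart k lF Q)).card) (hik : i < k) :
    fwdQ n (toPart k lF Q) ⟨i, h'⟩ = Q ⟨i, hik⟩ := by
  have hIco : Finset.Ico (bE n (toPart k lF Q) i + 1) (bE n (toPart k lF Q) (i + 1))
      = gapI lF i := by
    rw [bE_toPart hn hsum hpos hQ (le_of_lt hik), bE_toPart hn hsum hpos hQ hik, gapI]
  ext B
  rw [fwdQ]
  simp only [Fin.val_mk]
  rw [hIco, Finset.mem_filter]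
  constructor
  · rintro ⟨hB, hsub⟩
    rcases Finset.mem_insert.1 hB with rfl | hB'
    · exfalso
      have h0 : (0 : ℕ) ∈ gapI lF i := hsub (zero_mem_B0 (k_pos hn hsum))
      rw [mem_gapI] at h0
      omega
    · obtain ⟨j, -, hj⟩ := Finset.mem_biUnion.1 hB'
      obtain ⟨x, hx⟩ := Finset.nonempty_iff_ne_empty.2 ((hQ j).1 B hj)
      have hgj : x ∈ gapI lF (j : ℕ) := (hQ j).2.1 B hj hx
      have hgi : x ∈ gapI lF i := hsub hx
      have : (j : ℕ) = i := gapI_eq_of_mem hpos j.isLt hik hgj hgi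
      have hje : j = ⟨i, hik⟩ := Fin.ext this
      subst hje
      exact hj
  · intro hB
    refine ⟨Finset.mem_insert.2 (Or.inr (Finset.mem_biUnion.2 ⟨⟨i, hik⟩, Finset.mem_univ _, hB⟩)), ?_⟩
    have := (hQ ⟨i, hik⟩).2.1 B hB
    simpa using this

end RightInv2

section Core

lemma sig_eq {k k' : ℕ} {l l' : ℕ →₀ ℕ} {Q : Fin k → Finset (Finset ℕ)}
    {Q' : Fin k' → Finset (Finset ℕ)} (hk : k' = k) (hl : l' = l)
    (hQ : ∀ (i : ℕ) (h' : i < k') (h : i < k), Q' ⟨i, h'⟩ = Q ⟨i, h⟩) :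
    (⟨k', l', Q'⟩ : Σ m : ℕ, Σ _l : ℕ →₀ ℕ, (Fin m → Finset (Finset ℕ))) = ⟨k, l, Q⟩ := by
  subst hk
  subst hl
  have : Q' = Q := funext fun i => by
    rcases i with ⟨i, h⟩
    exact hQ i h h
  rw [this]

noncomputable def codSet (n : ℕ) : Finset (Σ k : ℕ, Σ _l : ℕ →₀ ℕ, (Fin k → Finset (Finset ℕ))) :=
  (Finset.range (n + 1)).sigma (fun k =>
    ((Finset.finsuppAntidiag (Finset.range k) n).filter (fun l => ∀ j < k, 1 ≤ l j)).sigma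
      (fun l => Fintype.piFinset (fun i : Fin k => ncwDom (gapI l (i : ℕ)))))

lemma mem_codSet {n : ℕ} {x : Σ k : ℕ, Σ _l : ℕ →₀ ℕ, (Fin k → Finset (Finset ℕ))} :
    x ∈ codSet n ↔ x.1 < n + 1 ∧ (psum x.2.1 x.1 = n ∧ x.2.1.support ⊆ Finset.range x.1) ∧
      (∀ j < x.1, 1 ≤ x.2.1 j) ∧ ∀ i : Fin x.1, NCPart (gapI x.2.1 (i : ℕ)) (x.2.2 i) := by
  obtain ⟨k, l, Q⟩ := x
  simp only [codSet, Finset.mem_sigma, Finset.mem_filter, Finset.mem_finsuppAntidiag,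
    Fintype.mem_piFinset, mem_ncwDom, Finset.mem_range]
  constructor
  · rintro ⟨h1, ⟨⟨h2, h3⟩, h4⟩, h5⟩
    exact ⟨h1, ⟨h2, h3⟩, h4, h5⟩
  · rintro ⟨h1, ⟨h2, h3⟩, h4, h5⟩
    exact ⟨h1, ⟨⟨h2, h3⟩, h4⟩, h5⟩

lemma core_bij (a : ℕ → ℕ) {n : ℕ} (hn : 0 < n) :
    ncw a (Finset.range n) =
    ∑ x ∈ codSet n, a x.1 * ∏ i : Fin x.1, ∏ B ∈ x.2.2 i, a B.card := by
  refine Finset.sum_nbij'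
    (fun P => (⟨(block0 P).card, diffL n P, fwdQ n P⟩ :
      Σ k : ℕ, Σ _l : ℕ →₀ ℕ, (Fin k → Finset (Finset ℕ))))
    (fun x => toPart x.1 x.2.1 x.2.2) ?_ ?_ ?_ ?_ ?_
  · intro P hP
    have hP' := mem_ncwDom.1 hP
    rw [mem_codSet]
    dsimp only
    refine ⟨?_, ⟨psum_diffL_card hn hP', diffL_support⟩,
      fun j hj => diffL_pos hn hP' hj, fun i => fwdQ_valid hn hP' i⟩
    have : block0 P ⊆ Finset.range n := hP'.2.1 _ (block0_spec hn hP').1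
    have := Finset.card_le_card this
    rw [Finset.card_range] at this
    omega
  · intro x hx
    obtain ⟨k, l, Q⟩ := x
    rw [mem_codSet] at hx
    obtain ⟨h1, ⟨h2, h3⟩, h4, h5⟩ := hx
    exact mem_ncwDom.2 (toPart_valid hn h2 h4 h5)
  · intro P hP
    exact toPart_fwd hn (mem_ncwDom.1 hP)
  · intro x hx
    obtain ⟨k, l, Q⟩ := x
    rw [mem_codSet] at hx
    obtain ⟨h1, ⟨h2, h3⟩, h4, h5⟩ := hx
    exact sig_eq (block0_toPart_card hn h2 h4 h5) (diffL_toPart hn h2 h4 h3 h5)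
      (fun i h' h => fwdQ_toPart hn h2 h4 h5 h' h)
  · intro P hP
    have hP' := mem_ncwDom.1 hP
    have hkpos : 0 < (block0 P).card := block0_card_pos hn hP'
    conv_lhs => rw [← toPart_fwd hn hP']
    exact toPart_weight a hkpos (fun j hj => diffL_pos hn hP' hj) (fwdQ_valid hn hP')

end Core

section Final

lemma gapI_eq_image {l : ℕ → ℕ} {i : ℕ} (h1 : 1 ≤ l i) :
    gapI l i = (Finset.range (l i - 1)).image (fun t => t + (psum l i + 1)) := by
  ext x
  simp only [gapI, Finset.mem_Ico, mem_image, Finset.mem_range, psum_succ]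
  constructor
  · intro ⟨ha, hb⟩
    exact ⟨x - (psum l i + 1), by omega, by omega⟩
  · rintro ⟨t, ht, rfl⟩
    omega

lemma core_sum (a : ℕ → ℕ) {n : ℕ} (hn : 0 < n) :
    ncw a (Finset.range n) = ∑ k ∈ Finset.range (n + 1),
      a k * ∑ l ∈ (Finset.finsuppAntidiag (Finset.range k) n).filter
          (fun l => ∀ j < k, 1 ≤ l j),
        ∏ i ∈ Finset.range k, ncTransform a (l i - 1) := by
  rw [core_bij a hn, codSet, Finset.sum_sigma]
  refine Finset.sum_congr rfl fun k _ => ?_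
  rw [Finset.sum_sigma, Finset.mul_sum]
  refine Finset.sum_congr rfl fun l hl => ?_
  dsimp only
  rw [← Finset.mul_sum]
  congr 1
  have key : ∀ i : Fin k, ncTransform a (l (i : ℕ) - 1) =
      ∑ q ∈ ncwDom (gapI l (i : ℕ)), ∏ B ∈ q, a B.card := by
    intro i
    have h1 : 1 ≤ l (i : ℕ) := (Finset.mem_filter.1 hl).2 (i : ℕ) i.isLt
    have hmono : StrictMono (fun t : ℕ => t + (psum l (i : ℕ) + 1)) :=
      fun x y h => Nat.add_lt_add_right h _
    calc ncTransform a (l (i : ℕ) - 1)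
        = ncw a (Finset.range (l (i : ℕ) - 1)) := ncTransform_eq_ncw a _
      _ = ncw a ((Finset.range (l (i : ℕ) - 1)).image (fun t => t + (psum l (i : ℕ) + 1))) :=
          (ncw_image a hmono _).symm
      _ = ncw a (gapI l (i : ℕ)) := by rw [← gapI_eq_image h1]
      _ = ∑ q ∈ ncwDom (gapI l (i : ℕ)), ∏ B ∈ q, a B.card := rfl
  rw [Finset.prod_range (fun j => ncTransform a (l j - 1))]
  refine Eq.trans (Finset.prod_univ_sum (fun i : Fin k => ncwDom (gapI l (i : ℕ)))
    (fun _ q => ∏ B ∈ q, a B.card)).symm ?_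
  exact Finset.prod_congr rfl fun i _ => (key i).symm

lemma coeff_X_mul_mk (b : ℕ → ℕ) (m : ℕ) :
    PowerSeries.coeff (R := ℕ) m (PowerSeries.X * PowerSeries.mk b) =
      if m = 0 then 0 else b (m - 1) := by
  cases m with
  | zero => simp [PowerSeries.coeff_zero_X_mul]
  | succ m => simp [PowerSeries.coeff_succ_X_mul, PowerSeries.coeff_mk]

end Final

/-- The generating function `B(x) = ∑ b_n xⁿ` of the noncrossing partition
transform `b` of `a` (with `a 0 = 1`) satisfies `B = ∑_{k≥0} a_k (x B)^k`, stated
coefficientwise. -/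
theorem ncTransform_functional_equation (a : ℕ → ℕ) (ha : a 0 = 1) :
    ∀ n : ℕ, PowerSeries.coeff (R := ℕ) n (PowerSeries.mk (ncTransform a)) =
      ∑ k ∈ Finset.range (n + 1), PowerSeries.coeff (R := ℕ) n
        (PowerSeries.C (R := ℕ) (a k) *
          (PowerSeries.X * PowerSeries.mk (ncTransform a)) ^ k) := by
  intro n
  rcases Nat.eq_zero_or_pos n with rfl | hn
  · rw [PowerSeries.coeff_mk, Finset.sum_range_one, pow_zero, mul_one,
      PowerSeries.coeff_zero_C, ha, ncTransform_eq_ncw, Finset.range_zero, ncw_empty]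
  · rw [PowerSeries.coeff_mk, ncTransform_eq_ncw, core_sum a hn]
    refine Finset.sum_congr rfl fun k _ => ?_
    rw [PowerSeries.coeff_C_mul]
    congr 1
    rw [PowerSeries.coeff_pow, ← Finset.sum_filter_add_sum_filter_not
      (Finset.finsuppAntidiag (Finset.range k) n) (fun l => ∀ j < k, 1 ≤ l j)]
    have h2 : ∑ l ∈ (Finset.finsuppAntidiag (Finset.range k) n).filter
        (fun l => ¬ ∀ j < k, 1 ≤ l j),
        ∏ i ∈ Finset.range k,
          PowerSeries.coeff (R := ℕ) (l i) (PowerSeries.X * PowerSeries.mk (ncTransform a)) = 0 := by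
      refine Finset.sum_eq_zero fun l hl => ?_
      have := (Finset.mem_filter.1 hl).2
      push_neg at this
      obtain ⟨j, hj, hlj⟩ := this
      refine Finset.prod_eq_zero (Finset.mem_range.2 hj) ?_
      rw [coeff_X_mul_mk, if_pos (by omega)]
    rw [h2, add_zero]
    refine (Finset.sum_congr rfl fun l hl => ?_).symm
    refine Finset.prod_congr rfl fun i hi => ?_
    rw [coeff_X_mul_mk, if_neg]
    have := (Finset.mem_filter.1 hl).2 i (Finset.mem_range.1 hi)
    omega
end

section
/- Let t(n) denote the sum, over all integer partitions π of n, of the product of the nonzero entries of the tuple obtained by subtracting 1 from each part of π (with the empty product equal to 1). Then the generating function sum_{n≥0} t(n) x^n equals (1/(1-x)) * prod_{k≥2} 1/(1-(k-1)x^k), and in particular t(0)=1, t(1)=1, t(2)=2, t(3)=4, t(4)=8, t(5)=14, t(6)=27. -/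
/-- `t n` is the sum over integer partitions `π` of `n` of the product of the
nonzero entries of `π` with 1 subtracted from each part (parts equal to 1
contribute nothing; the empty product is 1). -/
def t (n : ℕ) : ℕ :=
  ∑ π : n.Partition, ((π.parts.filter (2 ≤ ·)).map (· - 1)).prod

namespace TAux

open Finset PowerSeries

/-- The weight of a part of size `k`. -/
def wn (k : ℕ) : ℕ := if 2 ≤ k then k - 1 else 1

/-- The generating series for parts of size `k`. -/
noncomputable def W (k : ℕ) : PowerSeries ℤ :=
  PowerSeries.mk fun m => if k ∣ m then ((wn k : ℤ)) ^ (m / k) else 0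

lemma geom (k : ℕ) (hk : k ≠ 0) (a : ℤ) :
    (1 - PowerSeries.C a * PowerSeries.X ^ k) *
      PowerSeries.mk (fun m => if k ∣ m then a ^ (m / k) else 0) = 1 := by
  set S : PowerSeries ℤ := PowerSeries.mk (fun m => if k ∣ m then a ^ (m / k) else 0) with hS
  have hre : (1 - PowerSeries.C a * PowerSeries.X ^ k) * S = S - (S * X ^ k) * C a := by
    ring
  rw [hre]
  ext n
  simp only [map_sub, coeff_mul_C, coeff_mul_X_pow', hS, coeff_mk, coeff_one]
  rcases Nat.eq_zero_or_pos n with rfl | hn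
  · rw [if_pos (dvd_zero k), if_neg (by omega : ¬k ≤ 0), if_pos rfl, Nat.zero_div, pow_zero,
      zero_mul, sub_zero]
  · rw [if_neg (by omega : ¬n = 0)]
    by_cases hkn : k ≤ n
    · by_cases hd : k ∣ n
      · rw [if_pos hd, if_pos hkn, if_pos (Nat.dvd_sub hd dvd_rfl)]
        obtain ⟨q, rfl⟩ := hd
        rcases q with _ | p
        · omega
        · rw [Nat.mul_div_cancel_left _ (Nat.pos_of_ne_zero hk),
            show k * (p + 1) - k = k * p by rw [Nat.mul_succ, Nat.add_sub_cancel],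
            Nat.mul_div_cancel_left _ (Nat.pos_of_ne_zero hk), pow_succ, sub_self]
      · have hd' : ¬k ∣ n - k := fun h => hd (Nat.sub_add_cancel hkn ▸ Nat.dvd_add h dvd_rfl)
        rw [if_neg hd, if_pos hkn, if_neg hd', zero_mul, sub_zero]
    · rw [if_neg hkn, if_neg fun hd => hkn (Nat.le_of_dvd hn hd), zero_mul, sub_zero]

lemma coeff_W (k m : ℕ) :
    coeff m (W k) = if k ∣ m then ((wn k : ℤ)) ^ (m / k) else 0 :=
  coeff_mk _ _

lemma part_le {n : ℕ} (π : n.Partition) {i : ℕ} (hi : i ∈ π.parts) : i ≤ n := by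
  obtain ⟨m', hm⟩ := Multiset.exists_cons_of_mem hi
  have h2 : i ≤ π.parts.sum := by rw [hm]; simp
  rwa [π.parts_sum] at h2

lemma weight_nat (N n : ℕ) (hn : n ≤ N) (π : n.Partition) :
    ∏ k ∈ Icc 1 N, wn k ^ π.parts.count k
      = ((π.parts.filter (2 ≤ ·)).map (· - 1)).prod := by
  classical
  rw [Finset.prod_multiset_map_count]
  have hmem : ∀ i ∈ π.parts, i ≤ N := by
    intro i hi
    obtain ⟨m', hm⟩ := Multiset.exists_cons_of_mem hi
    have h2 : i ≤ π.parts.sum := by rw [hm]; simp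
    rw [π.parts_sum] at h2
    exact le_trans h2 hn
  have hsub : (π.parts.filter (2 ≤ ·)).toFinset ⊆ Icc 2 N := by
    intro i hi
    simp only [Multiset.toFinset_filter, Finset.mem_filter, Multiset.mem_toFinset] at hi
    exact mem_Icc.2 ⟨hi.2, hmem i hi.1⟩
  rw [Finset.prod_subset hsub]
  · rw [← Finset.prod_subset (Icc_subset_Icc_left one_le_two)
      (fun x hx hx' => by
        have : x = 1 := by simp only [mem_Icc] at hx hx'; omega
        simp [this, wn])]
    apply Finset.prod_congr rfl
    intro k hk
    have hk2 : 2 ≤ k := (mem_Icc.1 hk).1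
    rw [Multiset.count_filter, if_pos hk2, wn, if_pos hk2]
  · intro x hx hx'
    rw [Multiset.count_eq_zero_of_notMem, pow_zero]
    rw [Multiset.mem_toFinset] at hx'
    exact hx'

/-- The finsupp associated to a partition. -/
def φ {n : ℕ} (p : n.Partition) : ℕ →₀ ℕ where
  support := p.parts.toFinset
  toFun := fun i => p.parts.count i * i
  mem_support_toFun := by
    intro a
    simp only [Multiset.mem_toFinset, ne_eq, mul_eq_zero, not_or, Multiset.count_eq_zero]
    constructor
    · intro h
      exact ⟨fun h' => h' h, (p.parts_pos h).ne'⟩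
    · intro h
      by_contra h'
      exact h.1 h'

lemma coeff_prod_W (N n : ℕ) (hn : n ≤ N) :
    coeff n (∏ k ∈ Icc 1 N, W k) = (t n : ℤ) := by
  classical
  rw [PowerSeries.coeff_prod]
  simp only [W, coeff_mk]
  rw [t, Nat.cast_sum]
  have hterm : ∀ f : ℕ →₀ ℕ,
      (∏ k ∈ Icc 1 N, if k ∣ f k then ((wn k : ℤ)) ^ (f k / k) else 0)
        = if ∀ k ∈ Icc 1 N, k ∣ f k then ∏ k ∈ Icc 1 N, ((wn k : ℤ)) ^ (f k / k) else 0 := by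
    intro f
    split_ifs with h
    · exact Finset.prod_congr rfl fun k hk => if_pos (h k hk)
    · push_neg at h
      obtain ⟨k, hk, hk'⟩ := h
      exact Finset.prod_eq_zero hk (if_neg hk')
  rw [Finset.sum_congr rfl fun f _ => hterm f, ← Finset.sum_filter]
  symm
  refine Finset.sum_bij (fun (p : n.Partition) _ => φ p) ?_ ?_ ?_ ?_
  · -- maps to the filtered set
    intro p _
    rw [Finset.mem_filter]
    constructor
    · rw [Finset.mem_finsuppAntidiag]
      constructor
      · have := Finset.sum_multiset_count_of_subset p.parts (Icc 1 N)
          (fun i hi => by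
            rw [Multiset.mem_toFinset] at hi
            exact mem_Icc.2 ⟨p.parts_pos hi, le_trans (part_le p hi) hn⟩)
        rw [p.parts_sum] at this
        have h2 : (Icc 1 N).sum ⇑(φ p) = ∑ i ∈ Icc 1 N, Multiset.count i p.parts • i :=
          Finset.sum_congr rfl fun k _ => by simp [φ]
        rw [show (Icc 1 N).sum ⇑((fun p _ => φ p) p ‹p ∈ univ›) = (Icc 1 N).sum ⇑(φ p) from rfl,
          h2]
        exact this.symm
      · intro i hi
        have hi' : i ∈ p.parts.toFinset := hi
        rw [Multiset.mem_toFinset] at hi'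
        exact mem_Icc.2 ⟨p.parts_pos hi', le_trans (part_le p hi') hn⟩
    · intro k _
      exact ⟨p.parts.count k, by simp [φ, mul_comm]⟩
  · -- injective
    intro p₁ _ p₂ _ h
    apply Nat.Partition.ext
    ext i
    have h' := congrArg (fun f : ℕ →₀ ℕ => f i) h
    simp only [φ, Finsupp.coe_mk] at h'
    rcases Nat.eq_zero_or_pos i with rfl | hi
    · rw [Multiset.count_eq_zero_of_notMem (fun h => (p₁.parts_pos h).false),
        Multiset.count_eq_zero_of_notMem (fun h => (p₂.parts_pos h).false)]
    · exact Nat.eq_of_mul_eq_mul_right hi h'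
  · -- surjective
    intro f hf
    rw [Finset.mem_filter, Finset.mem_finsuppAntidiag] at hf
    obtain ⟨⟨hsum, hsupp⟩, hdvd⟩ := hf
    refine ⟨⟨∑ i ∈ Icc 1 N, Multiset.replicate (f i / i) i, ?_, ?_⟩, Finset.mem_univ _, ?_⟩
    · intro i hi
      rw [Multiset.mem_sum] at hi
      obtain ⟨j, hj, hj'⟩ := hi
      have := Multiset.eq_of_mem_replicate hj'
      subst this
      exact (mem_Icc.1 hj).1
    · rw [Multiset.sum_sum]
      rw [← hsum]
      apply Finset.sum_congr rfl
      intro i hi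
      rw [Multiset.sum_replicate, smul_eq_mul]
      exact Nat.div_mul_cancel (hdvd i hi)
    · ext i
      simp only [φ, Finsupp.coe_mk]
      simp_rw [Multiset.count_sum', Multiset.count_replicate]
      rw [Finset.sum_ite_eq' (Icc 1 N) i (fun j => f j / j)]
      split_ifs with h
      · rw [Nat.div_mul_cancel (hdvd i h)]
      · rw [zero_mul]
        exact (Finsupp.notMem_support_iff.1 fun hs => h (hsupp hs)).symm
  · -- weights agree
    intro p _
    have : ∀ k ∈ Icc 1 N, (φ p) k / k = p.parts.count k := by
      intro k hk
      simp only [φ, Finsupp.coe_mk]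
      exact Nat.mul_div_cancel _ (by have := (mem_Icc.1 hk).1; omega)
    rw [Finset.prod_congr rfl fun k hk => by rw [this k hk]]
    rw [← weight_nat N n hn p]
    push_cast
    rfl

lemma Tstep (N : ℕ) : (∏ k ∈ Icc 1 (N + 1), W k) = (∏ k ∈ Icc 1 N, W k) * W (N + 1) :=
  Finset.prod_Icc_succ_top (by omega) _

lemma t_values : t 0 = 1 ∧ t 1 = 1 ∧ t 2 = 2 ∧ t 3 = 4 ∧ t 4 = 8 ∧ t 5 = 14 ∧ t 6 = 27 := by
  have r1 : ∀ m : ℕ, coeff m (∏ k ∈ Icc 1 1, W k) = 1 := by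
    intro m
    rw [Finset.Icc_self, Finset.prod_singleton]
    simp [W, coeff_mk, wn]
  have r1_0 : coeff 0 (∏ k ∈ Icc 1 1, W k) = 1 := r1 0
  have r1_1 : coeff 1 (∏ k ∈ Icc 1 1, W k) = 1 := r1 1
  have r1_2 : coeff 2 (∏ k ∈ Icc 1 1, W k) = 1 := r1 2
  have r1_3 : coeff 3 (∏ k ∈ Icc 1 1, W k) = 1 := r1 3
  have r1_4 : coeff 4 (∏ k ∈ Icc 1 1, W k) = 1 := r1 4
  have r1_5 : coeff 5 (∏ k ∈ Icc 1 1, W k) = 1 := r1 5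
  have r1_6 : coeff 6 (∏ k ∈ Icc 1 1, W k) = 1 := r1 6
  have r2_0 : coeff 0 (∏ k ∈ Icc 1 2, W k) = 1 := by
    rw [show (2:ℕ) = 1+1 from rfl, Tstep, coeff_mul, Finset.Nat.sum_antidiagonal_eq_sum_range_succ_mk]
    norm_num [Finset.sum_range_succ, coeff_W, wn, r1_0, r1_1, r1_2, r1_3, r1_4, r1_5, r1_6]
    all_goals decide
  have r2_1 : coeff 1 (∏ k ∈ Icc 1 2, W k) = 1 := by
    rw [show (2:ℕ) = 1+1 from rfl, Tstep, coeff_mul, Finset.Nat.sum_antidiagonal_eq_sum_range_succ_mk]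
    norm_num [Finset.sum_range_succ, coeff_W, wn, r1_0, r1_1, r1_2, r1_3, r1_4, r1_5, r1_6]
    all_goals decide
  have r2_2 : coeff 2 (∏ k ∈ Icc 1 2, W k) = 2 := by
    rw [show (2:ℕ) = 1+1 from rfl, Tstep, coeff_mul, Finset.Nat.sum_antidiagonal_eq_sum_range_succ_mk]
    norm_num [Finset.sum_range_succ, coeff_W, wn, r1_0, r1_1, r1_2, r1_3, r1_4, r1_5, r1_6]
    all_goals decide
  have r2_3 : coeff 3 (∏ k ∈ Icc 1 2, W k) = 2 := by
    rw [show (2:ℕ) = 1+1 from rfl, Tstep, coeff_mul, Finset.Nat.sum_antidiagonal_eq_sum_range_succ_mk]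
    norm_num [Finset.sum_range_succ, coeff_W, wn, r1_0, r1_1, r1_2, r1_3, r1_4, r1_5, r1_6]
    all_goals decide
  have r2_4 : coeff 4 (∏ k ∈ Icc 1 2, W k) = 3 := by
    rw [show (2:ℕ) = 1+1 from rfl, Tstep, coeff_mul, Finset.Nat.sum_antidiagonal_eq_sum_range_succ_mk]
    norm_num [Finset.sum_range_succ, coeff_W, wn, r1_0, r1_1, r1_2, r1_3, r1_4, r1_5, r1_6]
    all_goals decide
  have r2_5 : coeff 5 (∏ k ∈ Icc 1 2, W k) = 3 := by
    rw [show (2:ℕ) = 1+1 from rfl, Tstep, coeff_mul, Finset.Nat.sum_antidiagonal_eq_sum_range_succ_mk]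
    norm_num [Finset.sum_range_succ, coeff_W, wn, r1_0, r1_1, r1_2, r1_3, r1_4, r1_5, r1_6]
    all_goals decide
  have r2_6 : coeff 6 (∏ k ∈ Icc 1 2, W k) = 4 := by
    rw [show (2:ℕ) = 1+1 from rfl, Tstep, coeff_mul, Finset.Nat.sum_antidiagonal_eq_sum_range_succ_mk]
    norm_num [Finset.sum_range_succ, coeff_W, wn, r1_0, r1_1, r1_2, r1_3, r1_4, r1_5, r1_6]
    all_goals decide
  have r3_0 : coeff 0 (∏ k ∈ Icc 1 3, W k) = 1 := by
    rw [show (3:ℕ) = 2+1 from rfl, Tstep, coeff_mul, Finset.Nat.sum_antidiagonal_eq_sum_range_succ_mk]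
    norm_num [Finset.sum_range_succ, coeff_W, wn, r2_0, r2_1, r2_2, r2_3, r2_4, r2_5, r2_6]
    all_goals decide
  have r3_1 : coeff 1 (∏ k ∈ Icc 1 3, W k) = 1 := by
    rw [show (3:ℕ) = 2+1 from rfl, Tstep, coeff_mul, Finset.Nat.sum_antidiagonal_eq_sum_range_succ_mk]
    norm_num [Finset.sum_range_succ, coeff_W, wn, r2_0, r2_1, r2_2, r2_3, r2_4, r2_5, r2_6]
    all_goals decide
  have r3_2 : coeff 2 (∏ k ∈ Icc 1 3, W k) = 2 := by
    rw [show (3:ℕ) = 2+1 from rfl, Tstep, coeff_mul, Finset.Nat.sum_antidiagonal_eq_sum_range_succ_mk]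
    norm_num [Finset.sum_range_succ, coeff_W, wn, r2_0, r2_1, r2_2, r2_3, r2_4, r2_5, r2_6]
    all_goals decide
  have r3_3 : coeff 3 (∏ k ∈ Icc 1 3, W k) = 4 := by
    rw [show (3:ℕ) = 2+1 from rfl, Tstep, coeff_mul, Finset.Nat.sum_antidiagonal_eq_sum_range_succ_mk]
    norm_num [Finset.sum_range_succ, coeff_W, wn, r2_0, r2_1, r2_2, r2_3, r2_4, r2_5, r2_6]
    all_goals decide
  have r3_4 : coeff 4 (∏ k ∈ Icc 1 3, W k) = 5 := by
    rw [show (3:ℕ) = 2+1 from rfl, Tstep, coeff_mul, Finset.Nat.sum_antidiagonal_eq_sum_range_succ_mk]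
    norm_num [Finset.sum_range_succ, coeff_W, wn, r2_0, r2_1, r2_2, r2_3, r2_4, r2_5, r2_6]
    all_goals decide
  have r3_5 : coeff 5 (∏ k ∈ Icc 1 3, W k) = 7 := by
    rw [show (3:ℕ) = 2+1 from rfl, Tstep, coeff_mul, Finset.Nat.sum_antidiagonal_eq_sum_range_succ_mk]
    norm_num [Finset.sum_range_succ, coeff_W, wn, r2_0, r2_1, r2_2, r2_3, r2_4, r2_5, r2_6]
    all_goals decide
  have r3_6 : coeff 6 (∏ k ∈ Icc 1 3, W k) = 12 := by
    rw [show (3:ℕ) = 2+1 from rfl, Tstep, coeff_mul, Finset.Nat.sum_antidiagonal_eq_sum_range_succ_mk]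
    norm_num [Finset.sum_range_succ, coeff_W, wn, r2_0, r2_1, r2_2, r2_3, r2_4, r2_5, r2_6]
    all_goals decide
  have r4_0 : coeff 0 (∏ k ∈ Icc 1 4, W k) = 1 := by
    rw [show (4:ℕ) = 3+1 from rfl, Tstep, coeff_mul, Finset.Nat.sum_antidiagonal_eq_sum_range_succ_mk]
    norm_num [Finset.sum_range_succ, coeff_W, wn, r3_0, r3_1, r3_2, r3_3, r3_4, r3_5, r3_6]
    all_goals decide
  have r4_1 : coeff 1 (∏ k ∈ Icc 1 4, W k) = 1 := by
    rw [show (4:ℕ) = 3+1 from rfl, Tstep, coeff_mul, Finset.Nat.sum_antidiagonal_eq_sum_range_succ_mk]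
    norm_num [Finset.sum_range_succ, coeff_W, wn, r3_0, r3_1, r3_2, r3_3, r3_4, r3_5, r3_6]
    all_goals decide
  have r4_2 : coeff 2 (∏ k ∈ Icc 1 4, W k) = 2 := by
    rw [show (4:ℕ) = 3+1 from rfl, Tstep, coeff_mul, Finset.Nat.sum_antidiagonal_eq_sum_range_succ_mk]
    norm_num [Finset.sum_range_succ, coeff_W, wn, r3_0, r3_1, r3_2, r3_3, r3_4, r3_5, r3_6]
    all_goals decide
  have r4_3 : coeff 3 (∏ k ∈ Icc 1 4, W k) = 4 := by
    rw [show (4:ℕ) = 3+1 from rfl, Tstep, coeff_mul, Finset.Nat.sum_antidiagonal_eq_sum_range_succ_mk]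
    norm_num [Finset.sum_range_succ, coeff_W, wn, r3_0, r3_1, r3_2, r3_3, r3_4, r3_5, r3_6]
    all_goals decide
  have r4_4 : coeff 4 (∏ k ∈ Icc 1 4, W k) = 8 := by
    rw [show (4:ℕ) = 3+1 from rfl, Tstep, coeff_mul, Finset.Nat.sum_antidiagonal_eq_sum_range_succ_mk]
    norm_num [Finset.sum_range_succ, coeff_W, wn, r3_0, r3_1, r3_2, r3_3, r3_4, r3_5, r3_6]
    all_goals decide
  have r4_5 : coeff 5 (∏ k ∈ Icc 1 4, W k) = 10 := by
    rw [show (4:ℕ) = 3+1 from rfl, Tstep, coeff_mul, Finset.Nat.sum_antidiagonal_eq_sum_range_succ_mk]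
    norm_num [Finset.sum_range_succ, coeff_W, wn, r3_0, r3_1, r3_2, r3_3, r3_4, r3_5, r3_6]
    all_goals decide
  have r4_6 : coeff 6 (∏ k ∈ Icc 1 4, W k) = 18 := by
    rw [show (4:ℕ) = 3+1 from rfl, Tstep, coeff_mul, Finset.Nat.sum_antidiagonal_eq_sum_range_succ_mk]
    norm_num [Finset.sum_range_succ, coeff_W, wn, r3_0, r3_1, r3_2, r3_3, r3_4, r3_5, r3_6]
    all_goals decide
  have r5_0 : coeff 0 (∏ k ∈ Icc 1 5, W k) = 1 := by
    rw [show (5:ℕ) = 4+1 from rfl, Tstep, coeff_mul, Finset.Nat.sum_antidiagonal_eq_sum_range_succ_mk]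
    norm_num [Finset.sum_range_succ, coeff_W, wn, r4_0, r4_1, r4_2, r4_3, r4_4, r4_5, r4_6]
    all_goals decide
  have r5_1 : coeff 1 (∏ k ∈ Icc 1 5, W k) = 1 := by
    rw [show (5:ℕ) = 4+1 from rfl, Tstep, coeff_mul, Finset.Nat.sum_antidiagonal_eq_sum_range_succ_mk]
    norm_num [Finset.sum_range_succ, coeff_W, wn, r4_0, r4_1, r4_2, r4_3, r4_4, r4_5, r4_6]
    all_goals decide
  have r5_2 : coeff 2 (∏ k ∈ Icc 1 5, W k) = 2 := by
    rw [show (5:ℕ) = 4+1 from rfl, Tstep, coeff_mul, Finset.Nat.sum_antidiagonal_eq_sum_range_succ_mk]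
    norm_num [Finset.sum_range_succ, coeff_W, wn, r4_0, r4_1, r4_2, r4_3, r4_4, r4_5, r4_6]
    all_goals decide
  have r5_3 : coeff 3 (∏ k ∈ Icc 1 5, W k) = 4 := by
    rw [show (5:ℕ) = 4+1 from rfl, Tstep, coeff_mul, Finset.Nat.sum_antidiagonal_eq_sum_range_succ_mk]
    norm_num [Finset.sum_range_succ, coeff_W, wn, r4_0, r4_1, r4_2, r4_3, r4_4, r4_5, r4_6]
    all_goals decide
  have r5_4 : coeff 4 (∏ k ∈ Icc 1 5, W k) = 8 := by
    rw [show (5:ℕ) = 4+1 from rfl, Tstep, coeff_mul, Finset.Nat.sum_antidiagonal_eq_sum_range_succ_mk]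
    norm_num [Finset.sum_range_succ, coeff_W, wn, r4_0, r4_1, r4_2, r4_3, r4_4, r4_5, r4_6]
    all_goals decide
  have r5_5 : coeff 5 (∏ k ∈ Icc 1 5, W k) = 14 := by
    rw [show (5:ℕ) = 4+1 from rfl, Tstep, coeff_mul, Finset.Nat.sum_antidiagonal_eq_sum_range_succ_mk]
    norm_num [Finset.sum_range_succ, coeff_W, wn, r4_0, r4_1, r4_2, r4_3, r4_4, r4_5, r4_6]
    all_goals decide
  have r5_6 : coeff 6 (∏ k ∈ Icc 1 5, W k) = 22 := by
    rw [show (5:ℕ) = 4+1 from rfl, Tstep, coeff_mul, Finset.Nat.sum_antidiagonal_eq_sum_range_succ_mk]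
    norm_num [Finset.sum_range_succ, coeff_W, wn, r4_0, r4_1, r4_2, r4_3, r4_4, r4_5, r4_6]
    all_goals decide
  have r6_0 : coeff 0 (∏ k ∈ Icc 1 6, W k) = 1 := by
    rw [show (6:ℕ) = 5+1 from rfl, Tstep, coeff_mul, Finset.Nat.sum_antidiagonal_eq_sum_range_succ_mk]
    norm_num [Finset.sum_range_succ, coeff_W, wn, r5_0, r5_1, r5_2, r5_3, r5_4, r5_5, r5_6]
    all_goals decide
  have r6_1 : coeff 1 (∏ k ∈ Icc 1 6, W k) = 1 := by
    rw [show (6:ℕ) = 5+1 from rfl, Tstep, coeff_mul, Finset.Nat.sum_antidiagonal_eq_sum_range_succ_mk]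
    norm_num [Finset.sum_range_succ, coeff_W, wn, r5_0, r5_1, r5_2, r5_3, r5_4, r5_5, r5_6]
    all_goals decide
  have r6_2 : coeff 2 (∏ k ∈ Icc 1 6, W k) = 2 := by
    rw [show (6:ℕ) = 5+1 from rfl, Tstep, coeff_mul, Finset.Nat.sum_antidiagonal_eq_sum_range_succ_mk]
    norm_num [Finset.sum_range_succ, coeff_W, wn, r5_0, r5_1, r5_2, r5_3, r5_4, r5_5, r5_6]
    all_goals decide
  have r6_3 : coeff 3 (∏ k ∈ Icc 1 6, W k) = 4 := by
    rw [show (6:ℕ) = 5+1 from rfl, Tstep, coeff_mul, Finset.Nat.sum_antidiagonal_eq_sum_range_succ_mk]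
    norm_num [Finset.sum_range_succ, coeff_W, wn, r5_0, r5_1, r5_2, r5_3, r5_4, r5_5, r5_6]
    all_goals decide
  have r6_4 : coeff 4 (∏ k ∈ Icc 1 6, W k) = 8 := by
    rw [show (6:ℕ) = 5+1 from rfl, Tstep, coeff_mul, Finset.Nat.sum_antidiagonal_eq_sum_range_succ_mk]
    norm_num [Finset.sum_range_succ, coeff_W, wn, r5_0, r5_1, r5_2, r5_3, r5_4, r5_5, r5_6]
    all_goals decide
  have r6_5 : coeff 5 (∏ k ∈ Icc 1 6, W k) = 14 := by
    rw [show (6:ℕ) = 5+1 from rfl, Tstep, coeff_mul, Finset.Nat.sum_antidiagonal_eq_sum_range_succ_mk]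
    norm_num [Finset.sum_range_succ, coeff_W, wn, r5_0, r5_1, r5_2, r5_3, r5_4, r5_5, r5_6]
    all_goals decide
  have r6_6 : coeff 6 (∏ k ∈ Icc 1 6, W k) = 27 := by
    rw [show (6:ℕ) = 5+1 from rfl, Tstep, coeff_mul, Finset.Nat.sum_antidiagonal_eq_sum_range_succ_mk]
    norm_num [Finset.sum_range_succ, coeff_W, wn, r5_0, r5_1, r5_2, r5_3, r5_4, r5_5, r5_6]
    all_goals decide
  refine ⟨?_, ?_, ?_, ?_, ?_, ?_, ?_⟩
  · have h := coeff_prod_W 0 0 le_rfl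
    rw [Finset.Icc_eq_empty (by omega), Finset.prod_empty] at h
    simpa using h.symm
  · have h := coeff_prod_W 1 1 le_rfl; rw [r1_1] at h; exact_mod_cast h.symm
  · have h := coeff_prod_W 2 2 le_rfl; rw [r2_2] at h; exact_mod_cast h.symm
  · have h := coeff_prod_W 3 3 le_rfl; rw [r3_3] at h; exact_mod_cast h.symm
  · have h := coeff_prod_W 4 4 le_rfl; rw [r4_4] at h; exact_mod_cast h.symm
  · have h := coeff_prod_W 5 5 le_rfl; rw [r5_5] at h; exact_mod_cast h.symm
  · have h := coeff_prod_W 6 6 le_rfl; rw [r6_6] at h; exact_mod_cast h.symm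

lemma coeff_mul_congr (n : ℕ) (A B Q : PowerSeries ℤ)
    (h : ∀ m ≤ n, coeff m A = coeff m B) :
    coeff n (A * Q) = coeff n (B * Q) := by
  rw [coeff_mul, coeff_mul]
  apply Finset.sum_congr rfl
  intro p hp
  rw [Finset.HasAntidiagonal.mem_antidiagonal] at hp
  rw [h p.1 (by omega)]

lemma part1 (n : ℕ) :
    PowerSeries.coeff (R := ℤ) n
        ((PowerSeries.mk fun m => (t m : ℤ)) * (1 - PowerSeries.X) *
          ∏ k ∈ Finset.Icc 2 n,
            (1 - PowerSeries.C (R := ℤ) ((k : ℤ) - 1) * PowerSeries.X ^ k)) =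
      if n = 0 then 1 else 0 := by
  rcases Nat.eq_zero_or_pos n with rfl | hn
  · rw [Finset.Icc_eq_empty (by omega), Finset.prod_empty, mul_one, if_pos rfl,
      coeff_zero_eq_constantCoeff_apply, map_mul, map_sub, map_one, constantCoeff_X,
      constantCoeff_mk]
    have h0 : t 0 = 1 := t_values.1
    rw [h0]
    norm_num
  · rw [if_neg (by omega), mul_assoc,
      coeff_mul_congr n _ (∏ k ∈ Icc 1 n, W k) _
        (fun m hm => by rw [coeff_mk, coeff_prod_W n m hm])]
    have hQ : (1 - (X : PowerSeries ℤ)) * ∏ k ∈ Icc 2 n, (1 - C ((k : ℤ) - 1) * X ^ k)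
        = ∏ k ∈ Icc 1 n, (1 - C ((wn k : ℕ) : ℤ) * X ^ k) := by
      rw [show Icc 1 n = insert 1 (Icc 2 n) from by
        ext x; simp only [mem_Icc, mem_insert]; omega]
      rw [Finset.prod_insert (by simp [mem_Icc])]
      congr 1
      · simp [wn]
      · apply Finset.prod_congr rfl
        intro k hk
        have hk2 : 2 ≤ k := (mem_Icc.1 hk).1
        rw [wn, if_pos hk2]
        congr 1
        push_cast [Nat.cast_sub (by omega : 1 ≤ k)]
        ring
    rw [hQ, ← Finset.prod_mul_distrib]
    have hone : ∀ k ∈ Icc 1 n, W k * (1 - C ((wn k : ℕ) : ℤ) * X ^ k) = 1 := fun k hk => by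
      rw [mul_comm]
      exact geom k (by have := (mem_Icc.1 hk).1; omega) ((wn k : ℕ) : ℤ)
    rw [Finset.prod_congr rfl hone, Finset.prod_const_one]
    simp [coeff_one, hn.ne']

end TAux

/-- Generating function identity
`∑ t(n) xⁿ = (1/(1-x)) ∏_{k≥2} 1/(1-(k-1)x^k)`, stated coefficientwise:
multiplying through, the coefficient of `xⁿ` in
`(∑ t(m) x^m)(1-x)∏_{k=2}^{n}(1-(k-1)x^k)` is `1` for `n = 0` and `0` otherwise
(factors with `k > n` do not affect the coefficient of `xⁿ`).  In particular
`t(0),…,t(6) = 1, 1, 2, 4, 8, 14, 27`. -/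
theorem t_generating_function :
    (∀ n : ℕ, PowerSeries.coeff (R := ℤ) n
        ((PowerSeries.mk fun m => (t m : ℤ)) * (1 - PowerSeries.X) *
          ∏ k ∈ Finset.Icc 2 n,
            (1 - PowerSeries.C (R := ℤ) ((k : ℤ) - 1) * PowerSeries.X ^ k)) =
      if n = 0 then 1 else 0) ∧
    t 0 = 1 ∧ t 1 = 1 ∧ t 2 = 2 ∧ t 3 = 4 ∧ t 4 = 8 ∧ t 5 = 14 ∧ t 6 = 27 := by
  exact ⟨TAux.part1, TAux.t_values⟩
end
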